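/- arXiv:1509.01485 — 6 statements merged into one kernel-verified Lean document; each statement's English description precedes it below -/
import Mathlib

section
/- Let 1 ≤ q < p < ∞, k ∈ ℕ, and let a_1* ≥ a_2* ≥ ... ≥ a_k* ≥ t ≥ 0 be real numbers. Then (∑_{n=1}^k (a_n*)^p)^{q/p} + t^q·(k+1)^{1/p - 1/q} ≥ (∑_{n=1}^k (a_n*)^p + t^p)^{q/p}. -/
/-- For `0 < r ≤ 1` and `c ≥ 0`, the function `x ↦ (x+c)^r - x^r` is antitone on `[0, ∞)`. -/
lemma aux_antitone (r c : ℝ) (hr0 : 0 < r) (hr1 : r ≤ 1) (hc : 0 ≤ c) :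
    AntitoneOn (fun x : ℝ => (x + c) ^ r - x ^ r) (Set.Ici 0) := by
  apply antitoneOn_of_deriv_nonpos (convex_Ici 0)
  · apply ContinuousOn.sub
    · exact ((continuous_id.add continuous_const).continuousOn).rpow_const
        (fun x _ => Or.inr hr0.le)
    · exact continuousOn_id.rpow_const (fun x _ => Or.inr hr0.le)
  · intro x hx
    rw [interior_Ici] at hx
    have hx0 : (0:ℝ) < x := hx
    have h1 : HasDerivAt (fun x : ℝ => (x + c) ^ r) (r * (x + c) ^ (r - 1) * 1) x :=
      (Real.hasDerivAt_rpow_const (Or.inl (by positivity))).comp x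
        ((hasDerivAt_id x).add_const c)
    have h2 : HasDerivAt (fun x : ℝ => x ^ r) (r * x ^ (r - 1)) x :=
      Real.hasDerivAt_rpow_const (Or.inl hx0.ne')
    exact ((h1.sub h2).differentiableAt).differentiableWithinAt
  · intro x hx
    rw [interior_Ici] at hx
    have hx0 : (0:ℝ) < x := hx
    have h1 : HasDerivAt (fun x : ℝ => (x + c) ^ r) (r * (x + c) ^ (r - 1) * 1) x :=
      (Real.hasDerivAt_rpow_const (Or.inl (by positivity))).comp x
        ((hasDerivAt_id x).add_const c)
    have h2 : HasDerivAt (fun x : ℝ => x ^ r) (r * x ^ (r - 1)) x :=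
      Real.hasDerivAt_rpow_const (Or.inl hx0.ne')
    rw [show (fun x : ℝ => (x + c) ^ r - x ^ r) = (fun x : ℝ => (x + c) ^ r) - (fun x : ℝ => x ^ r) from rfl, (h1.sub h2).deriv]
    have h3 : (x + c) ^ (r - 1) ≤ x ^ (r - 1) :=
      Real.rpow_le_rpow_of_nonpos hx0 (by linarith) (by linarith)
    nlinarith

/-- Let `1 ≤ q < p < ∞`, `k ∈ ℕ`, and let
`a 1 ≥ a 2 ≥ ⋯ ≥ a k ≥ t ≥ 0` be real numbers.  Then
`(∑_{n=1}^k (a n)^p)^{q/p} + t^q (k+1)^{1/p - 1/q} ≥ (∑_{n=1}^k (a n)^p + t^p)^{q/p}`. -/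
theorem stmt0 (p q : ℝ) (hq : 1 ≤ q) (hqp : q < p) (k : ℕ) (a : ℕ → ℝ) (t : ℝ)
    (ha0 : ∀ i, 1 ≤ i → i ≤ k → 0 ≤ a i)
    (hmono : ∀ i j, 1 ≤ i → i ≤ j → j ≤ k → a j ≤ a i)
    (ht0 : 0 ≤ t) (htk : 1 ≤ k → t ≤ a k) :
    (∑ n ∈ Finset.Icc 1 k, a n ^ p) ^ (q / p) + t ^ q * ((k : ℝ) + 1) ^ (1 / p - 1 / q)
      ≥ ((∑ n ∈ Finset.Icc 1 k, a n ^ p) + t ^ p) ^ (q / p) := by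
  have hp0 : (0:ℝ) < p := by linarith
  have hq0 : (0:ℝ) < q := by linarith
  set r := q / p with hr
  have hr0 : 0 < r := div_pos hq0 hp0
  have hr1 : r < 1 := (div_lt_one hp0).mpr hqp
  have hpr : p * r = q := by rw [hr]; field_simp
  have htq : (t ^ p) ^ r = t ^ q := by
    rw [← Real.rpow_mul ht0, hpr]
  rcases Nat.eq_zero_or_pos k with hk | hk
  · subst hk
    simp only [Finset.Icc_self, Nat.cast_zero, zero_add]
    rw [show Finset.Icc 1 0 = (∅ : Finset ℕ) by simp, Finset.sum_empty,
      Real.zero_rpow hr0.ne', zero_add, Real.one_rpow, mul_one, zero_add, htq]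
  · -- k ≥ 1
    set S := ∑ n ∈ Finset.Icc 1 k, a n ^ p with hS
    have hterm : ∀ n ∈ Finset.Icc 1 k, t ^ p ≤ a n ^ p := by
      intro n hn
      rw [Finset.mem_Icc] at hn
      have hant : t ≤ a n := le_trans (htk hk) (hmono n k hn.1 hn.2 le_rfl)
      exact Real.rpow_le_rpow ht0 hant hp0.le
    have hSk : (k : ℝ) * t ^ p ≤ S := by
      calc (k : ℝ) * t ^ p = ∑ n ∈ Finset.Icc 1 k, t ^ p := by
            rw [Finset.sum_const, Nat.card_Icc]; simp [nsmul_eq_mul]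
        _ ≤ S := Finset.sum_le_sum hterm
    have htp0 : (0:ℝ) ≤ t ^ p := Real.rpow_nonneg ht0 p
    have hk0 : (0:ℝ) < (k:ℝ) := by exact_mod_cast hk
    have hu0 : (0:ℝ) ≤ (k:ℝ) * t ^ p := by positivity
    have hS0 : (0:ℝ) ≤ S := le_trans hu0 hSk
    have hanti := aux_antitone r (t ^ p) hr0 hr1.le htp0 hu0 hS0 hSk
    simp only at hanti
    -- hanti : (S + t^p)^r - S^r ≤ ((k*t^p) + t^p)^r - (k*t^p)^r
    have e1 : ((k:ℝ) * t ^ p + t ^ p) ^ r = ((k:ℝ) + 1) ^ r * t ^ q := by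
      rw [show (k:ℝ) * t ^ p + t ^ p = ((k:ℝ) + 1) * t ^ p by ring,
        Real.mul_rpow (by positivity) htp0, htq]
    have e2 : ((k:ℝ) * t ^ p) ^ r = (k:ℝ) ^ r * t ^ q := by
      rw [Real.mul_rpow hk0.le htp0, htq]
    -- key combinatorial bound : (k+1)^r - k^r ≤ (k+1)^(r-1)
    have hkey : ((k:ℝ) + 1) ^ r - (k:ℝ) ^ r ≤ ((k:ℝ) + 1) ^ (r - 1) := by
      have h1 : ((k:ℝ) + 1) ^ (r - 1) ≤ (k:ℝ) ^ (r - 1) :=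
        Real.rpow_le_rpow_of_nonpos hk0 (by linarith) (by linarith)
      have h2 : (k:ℝ) ^ r = (k:ℝ) * (k:ℝ) ^ (r - 1) := by
        rw [← Real.rpow_one_add' hk0.le (by intro h; linarith)]; ring_nf
      have h3 : ((k:ℝ) + 1) ^ r = ((k:ℝ) + 1) * ((k:ℝ) + 1) ^ (r - 1) := by
        rw [← Real.rpow_one_add' (by positivity) (by intro h; linarith)]; ring_nf
      nlinarith
    -- exponent comparison : (k+1)^(r-1) ≤ (k+1)^(1/p - 1/q)
    have hexp : ((k:ℝ) + 1) ^ (r - 1) ≤ ((k:ℝ) + 1) ^ (1 / p - 1 / q) := by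
      apply Real.rpow_le_rpow_of_exponent_le (by linarith)
      have he : (1:ℝ)/p - 1/q = (q - p)/(p*q) := by field_simp
      rw [hr, he, div_sub_one hp0.ne', div_le_div_iff₀ hp0 (by positivity)]
      nlinarith [mul_nonneg (mul_nonneg (sub_nonneg.mpr hqp.le) hp0.le) (sub_nonneg.mpr hq)]
    have htq0 : (0:ℝ) ≤ t ^ q := Real.rpow_nonneg ht0 q
    have := mul_le_mul_of_nonneg_left hkey htq0
    have := mul_le_mul_of_nonneg_left hexp htq0
    rw [e1, e2] at hanti
    nlinarith
end

section
/- Fix 1 ≤ q < p < ∞. Let (v_n) be a sequence of nonnegative reals with v_n ≥ n^{1/p - 1/q} for all n ≥ 1. Then for every k ∈ ℕ and every nonincreasing sequence of nonnegative reals a_1* ≥ a_2* ≥ ... ≥ a_k*, one has ∑_{n=1}^k (a_n*)^q · v_n ≥ (∑_{n=1}^k (a_n*)^p)^{q/p}. -/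
/-- Key step inequality: if `0 < r ≤ 1`, `0 ≤ x`, `0 ≤ T`, `(k-1) * x ≤ T`, `1 ≤ k`, then
`(T + x)^r ≤ T^r + x^r * k^(r-1)`. -/
lemma step_ineq (r : ℝ) (hr0 : 0 < r) (hr1 : r ≤ 1) (k : ℕ) (hk : 1 ≤ k)
    (T x : ℝ) (hT : 0 ≤ T) (hx : 0 ≤ x) (hkx : ((k : ℝ) - 1) * x ≤ T) :
    (T + x) ^ r ≤ T ^ r + x ^ r * (k : ℝ) ^ (r - 1) := by
  rcases eq_or_lt_of_le hx with hx0 | hx0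
  · rw [← hx0]
    simp only [add_zero]
    have : (0:ℝ) ^ r = 0 := Real.zero_rpow (ne_of_gt hr0)
    rw [this, zero_mul, add_zero]
  rcases eq_or_lt_of_le hT with hT0 | hT0
  · -- T = 0, so k = 1
    have hk1 : (k : ℝ) ≤ 1 := by
      by_contra h
      push_neg at h
      have : 0 < ((k:ℝ) - 1) * x := mul_pos (by linarith) hx0
      rw [← hT0] at hkx; linarith
    have hk1' : k = 1 := le_antisymm (by exact_mod_cast hk1) hk
    subst hk1'
    rw [← hT0]
    simp [Real.zero_rpow (ne_of_gt hr0), Real.one_rpow]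
  -- Both T > 0 and x > 0. Set u = T / x.
  set u := T / x with hu
  have hu0 : 0 < u := div_pos hT0 hx0
  have huk : (k : ℝ) ≤ u + 1 := by
    have h : (k:ℝ) - 1 ≤ u := (le_div_iff₀ hx0).mpr hkx
    linarith
  -- key: (u+1)^r ≤ u^r + (u+1)^(r-1)
  have hA : (u + 1) ^ r ≤ u ^ r + (u + 1) ^ (r - 1) := by
    have h1 : (u + 1) ^ r = (u + 1) ^ (r - 1) * (u + 1) := by
      rw [← Real.rpow_add_one (by positivity) (r - 1)]
      ring_nf
    have h2 : (u + 1) ^ (r - 1) * u ≤ u ^ r := by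
      have : (u + 1) ^ (r - 1) ≤ u ^ (r - 1) :=
        Real.rpow_le_rpow_of_nonpos hu0 (by linarith) (by linarith)
      calc (u + 1) ^ (r - 1) * u ≤ u ^ (r - 1) * u :=
            mul_le_mul_of_nonneg_right this hu0.le
        _ = u ^ r := by rw [← Real.rpow_add_one (ne_of_gt hu0) (r - 1)]; ring_nf
    calc (u + 1) ^ r = (u + 1) ^ (r - 1) * u + (u + 1) ^ (r - 1) := by rw [h1]; ring
      _ ≤ u ^ r + (u + 1) ^ (r - 1) := by linarith
  have hB : (u + 1) ^ (r - 1) ≤ (k : ℝ) ^ (r - 1) := by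
    have hkpos : (0:ℝ) < k := by exact_mod_cast hk
    exact Real.rpow_le_rpow_of_nonpos hkpos huk (by linarith)
  have hC : (u + 1) ^ r ≤ u ^ r + (k : ℝ) ^ (r - 1) := le_trans hA (by linarith)
  -- multiply by x^r
  have hxr : (0:ℝ) < x ^ r := Real.rpow_pos_of_pos hx0 r
  have := mul_le_mul_of_nonneg_left hC hxr.le
  calc (T + x) ^ r = (x * (u + 1)) ^ r := by
        rw [hu]; congr 1; field_simp
    _ = x ^ r * (u + 1) ^ r := Real.mul_rpow hx0.le (by positivity)
    _ ≤ x ^ r * (u ^ r + (k : ℝ) ^ (r - 1)) := this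
    _ = x ^ r * u ^ r + x ^ r * (k : ℝ) ^ (r - 1) := by ring
    _ = T ^ r + x ^ r * (k : ℝ) ^ (r - 1) := by
        congr 1
        rw [← Real.mul_rpow hx0.le hu0.le, hu]
        congr 1; field_simp

/-- For a nonincreasing nonnegative sequence `b` on `[1,k]`:
`(∑ b n)^r ≤ ∑ (b n)^r * n^(r-1)`. -/
lemma sum_rpow_ineq (r : ℝ) (hr0 : 0 < r) (hr1 : r ≤ 1) (k : ℕ) (b : ℕ → ℝ)
    (hb0 : ∀ i, 1 ≤ i → i ≤ k → 0 ≤ b i)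
    (hbmono : ∀ i j, 1 ≤ i → i ≤ j → j ≤ k → b j ≤ b i) :
    (∑ n ∈ Finset.Icc 1 k, b n) ^ r ≤ ∑ n ∈ Finset.Icc 1 k, b n ^ r * (n : ℝ) ^ (r - 1) := by
  induction k with
  | zero => simp [Real.zero_rpow (ne_of_gt hr0)]
  | succ k ih =>
    have hsub : ∀ i, 1 ≤ i → i ≤ k → 0 ≤ b i := fun i h1 h2 => hb0 i h1 (le_trans h2 (Nat.le_succ k))
    have hsubm : ∀ i j, 1 ≤ i → i ≤ j → j ≤ k → b j ≤ b i :=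
      fun i j h1 h2 h3 => hbmono i j h1 h2 (le_trans h3 (Nat.le_succ k))
    have IH := ih hsub hsubm
    rw [Finset.sum_Icc_succ_top (Nat.one_le_iff_ne_zero.mpr (Nat.succ_ne_zero k)),
        Finset.sum_Icc_succ_top (Nat.one_le_iff_ne_zero.mpr (Nat.succ_ne_zero k))]
    have hbk1 : 0 ≤ b (k + 1) := hb0 (k + 1) (Nat.le_add_left 1 k) le_rfl
    have hT0 : 0 ≤ ∑ n ∈ Finset.Icc 1 k, b n :=
      Finset.sum_nonneg fun i hi => by
        rw [Finset.mem_Icc] at hi; exact hsub i hi.1 hi.2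
    have hTk : ((k + 1 : ℕ) : ℝ) - 1 ≤ (k : ℝ) := by push_cast; linarith
    have hkx : (((k + 1 : ℕ) : ℝ) - 1) * b (k + 1) ≤ ∑ n ∈ Finset.Icc 1 k, b n := by
      have : (k : ℝ) * b (k + 1) ≤ ∑ n ∈ Finset.Icc 1 k, b n := by
        have hcard : (Finset.Icc 1 k).card = k := by rw [Nat.card_Icc]; omega
        calc (k : ℝ) * b (k + 1) = ∑ _n ∈ Finset.Icc 1 k, b (k + 1) := by
              rw [Finset.sum_const, hcard, nsmul_eq_mul]
          _ ≤ ∑ n ∈ Finset.Icc 1 k, b n :=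
              Finset.sum_le_sum fun i hi => by
                rw [Finset.mem_Icc] at hi
                exact hbmono i (k + 1) hi.1 (le_trans hi.2 (Nat.le_succ k)) le_rfl
      calc (((k + 1 : ℕ) : ℝ) - 1) * b (k + 1) ≤ (k : ℝ) * b (k + 1) :=
            mul_le_mul_of_nonneg_right hTk hbk1
        _ ≤ _ := this
    have hstep := step_ineq r hr0 hr1 (k + 1) (Nat.le_add_left 1 k)
      (∑ n ∈ Finset.Icc 1 k, b n) (b (k + 1)) hT0 hbk1 hkx
    calc (∑ n ∈ Finset.Icc 1 k, b n + b (k + 1)) ^ r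
        ≤ (∑ n ∈ Finset.Icc 1 k, b n) ^ r + b (k + 1) ^ r * ((k + 1 : ℕ) : ℝ) ^ (r - 1) := hstep
      _ ≤ (∑ n ∈ Finset.Icc 1 k, b n ^ r * (n : ℝ) ^ (r - 1))
            + b (k + 1) ^ r * ((k + 1 : ℕ) : ℝ) ^ (r - 1) := by linarith

/-- Fix `1 ≤ q < p < ∞`.  If `v n ≥ n^{1/p - 1/q}` for all `n ≥ 1`,
then for every `k` and every nonincreasing sequence of nonnegative reals
`a 1 ≥ ⋯ ≥ a k ≥ 0`, we have `∑_{n=1}^k (a n)^q v n ≥ (∑_{n=1}^k (a n)^p)^{q/p}`. -/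
theorem stmt1 (p q : ℝ) (hq : 1 ≤ q) (hqp : q < p) (v : ℕ → ℝ)
    (hv0 : ∀ n : ℕ, 1 ≤ n → 0 ≤ v n)
    (hv : ∀ n : ℕ, 1 ≤ n → (n : ℝ) ^ (1 / p - 1 / q) ≤ v n)
    (k : ℕ) (a : ℕ → ℝ)
    (ha0 : ∀ i, 1 ≤ i → i ≤ k → 0 ≤ a i)
    (hmono : ∀ i j, 1 ≤ i → i ≤ j → j ≤ k → a j ≤ a i) :
    ∑ n ∈ Finset.Icc 1 k, a n ^ q * v n ≥ (∑ n ∈ Finset.Icc 1 k, a n ^ p) ^ (q / p) := by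
  have hp0 : (0:ℝ) < p := by linarith
  have hq0 : (0:ℝ) < q := by linarith
  set r := q / p with hr
  have hr0 : 0 < r := div_pos hq0 hp0
  have hr1 : r ≤ 1 := by rw [hr, div_le_one hp0]; linarith
  set b : ℕ → ℝ := fun n => a n ^ p with hb
  have hb0 : ∀ i, 1 ≤ i → i ≤ k → 0 ≤ b i := fun i h1 h2 =>
    Real.rpow_nonneg (ha0 i h1 h2) p
  have hbmono : ∀ i j, 1 ≤ i → i ≤ j → j ≤ k → b j ≤ b i := fun i j h1 h2 h3 =>
    Real.rpow_le_rpow (ha0 j (le_trans h1 h2) h3) (hmono i j h1 h2 h3) hp0.le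
  have key := sum_rpow_ineq r hr0 hr1 k b hb0 hbmono
  have hbr : ∀ n, 1 ≤ n → n ≤ k → b n ^ r = a n ^ q := by
    intro n h1 h2
    rw [hb, ← Real.rpow_mul (ha0 n h1 h2)]
    congr 1
    rw [hr]
    field_simp
  have hexp : ∀ n : ℕ, 1 ≤ n → (n : ℝ) ^ (r - 1) ≤ v n := by
    intro n h1
    have hn1 : (1:ℝ) ≤ n := by exact_mod_cast h1
    have h2 : r - 1 ≤ 1 / p - 1 / q := by
      have hpq : 1 / p - 1 / q ≤ 0 := by
        have : 1 / p ≤ 1 / q := one_div_le_one_div_of_le hq0 hqp.le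
        linarith
      have : r - 1 = q * (1 / p - 1 / q) := by
        rw [hr]; field_simp
      rw [this]
      nlinarith
    exact le_trans (Real.rpow_le_rpow_of_exponent_le hn1 h2) (hv n h1)
  calc (∑ n ∈ Finset.Icc 1 k, a n ^ p) ^ r
      = (∑ n ∈ Finset.Icc 1 k, b n) ^ r := rfl
    _ ≤ ∑ n ∈ Finset.Icc 1 k, b n ^ r * (n : ℝ) ^ (r - 1) := key
    _ ≤ ∑ n ∈ Finset.Icc 1 k, a n ^ q * v n := by
        apply Finset.sum_le_sum
        intro i hi
        rw [Finset.mem_Icc] at hi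
        rw [hbr i hi.1 hi.2]
        exact mul_le_mul_of_nonneg_left (hexp i hi.1)
          (Real.rpow_nonneg (ha0 i hi.1 hi.2) q)
end

section
/- Fix 1 ≤ q < p < ∞ and set s = 1/q - 1/p. There exist two nonincreasing sequences w = (w_n) and w̃ = (w̃_n) of positive reals with w_1 = w̃_1 = 1, both tending to 0 and both with divergent series, such that: (1) for every n, either w_n = n^{-s} or w̃_n = n^{-s}; (2) neither ∑_{n=1}^N w_n nor ∑_{n=1}^N w̃_n is bounded below by a constant multiple of N^{q/p}, i.e. liminf_N (∑_{n=1}^N w_n)/N^{q/p} = 0 and liminf_N (∑_{n=1}^N w̃_n)/N^{q/p} = 0. -/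
open Filter Topology

namespace Stmt2Aux

/-- Step property: given `a`, a good next milestone `b` together with a checkpoint `N`. -/
def P (s t : ℝ) (k a b : ℕ) : Prop :=
  a + 1 < b ∧
  (∃ N : ℕ, a < N ∧ N < b ∧
    (a : ℝ) + (N : ℝ) * (b : ℝ) ^ (-s) ≤ (N : ℝ) ^ t / ((k : ℝ) + 1)) ∧
  1 ≤ ((b : ℝ) - (a : ℝ) - 1) * (b : ℝ) ^ (-s)

lemma exists_step {s t : ℝ} (hs : 0 < s) (hs1 : s < 1) (ht : 0 < t) (ht1 : t ≤ 1)
    (k a : ℕ) : ∃ b : ℕ, P s t k a b := by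
  have hnat : Tendsto (fun n : ℕ => (n : ℝ)) atTop atTop := tendsto_natCast_atTop_atTop
  have hk : (0:ℝ) < 2 * ((k:ℝ) + 1) := by positivity
  have ha0 : (0:ℝ) ≤ (a:ℝ) := Nat.cast_nonneg a
  have hk0 : (0:ℝ) ≤ (k:ℝ) := Nat.cast_nonneg k
  -- choose the checkpoint N
  have h1 : Tendsto (fun n : ℕ => (n : ℝ) ^ t) atTop atTop := (tendsto_rpow_atTop ht).comp hnat
  obtain ⟨N, hNt, hN1⟩ :=
    ((h1.eventually_ge_atTop ((2 * ((k:ℝ) + 1)) * ((a:ℝ) + 1))).and (eventually_ge_atTop 1)).exists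
  have hN1R : (1:ℝ) ≤ (N:ℝ) := by exact_mod_cast hN1
  have hNtpos : (0:ℝ) < (N:ℝ) ^ t := Real.rpow_pos_of_pos (by linarith) t
  have hNle : (N:ℝ) ^ t ≤ (N:ℝ) := by
    calc (N:ℝ) ^ t ≤ (N:ℝ) ^ (1:ℝ) := Real.rpow_le_rpow_of_exponent_le hN1R ht1
    _ = (N:ℝ) := Real.rpow_one _
  have haN : a < N := by
    have h2 : (a:ℝ) + 1 ≤ (2 * ((k:ℝ) + 1)) * ((a:ℝ) + 1) := by nlinarith
    have : (a:ℝ) < (N:ℝ) := by linarith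
    exact_mod_cast this
  have haNt : (a:ℝ) ≤ (N:ℝ) ^ t / (2 * ((k:ℝ) + 1)) := by
    rw [le_div_iff₀ hk]
    nlinarith
  -- choose b
  have h2 : Tendsto (fun b : ℕ => (N:ℝ) * (b:ℝ) ^ (-s)) atTop (𝓝 0) := by
    have := ((tendsto_rpow_neg_atTop hs).comp hnat).const_mul (N:ℝ)
    simpa using this
  have h3 : Tendsto (fun b : ℕ => ((b:ℝ) - (a:ℝ) - 1) * (b:ℝ) ^ (-s)) atTop atTop := by
    have hA : Tendsto (fun b : ℕ => (b:ℝ) ^ (1 - s)) atTop atTop :=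
      (tendsto_rpow_atTop (by linarith)).comp hnat
    have hB : Tendsto (fun b : ℕ => -(((a:ℝ) + 1) * (b:ℝ) ^ (-s))) atTop (𝓝 0) := by
      have := (((tendsto_rpow_neg_atTop hs).comp hnat).const_mul ((a:ℝ) + 1)).neg
      simpa using this
    have h := hA.atTop_add hB
    apply h.congr'
    filter_upwards [eventually_ge_atTop 1] with b hb
    have hbpos : (0:ℝ) < (b:ℝ) := by exact_mod_cast hb
    have hEq : (b:ℝ) ^ (1 - s) = (b:ℝ) * (b:ℝ) ^ (-s) := by
      rw [show (1:ℝ) - s = 1 + (-s) by ring, Real.rpow_add hbpos, Real.rpow_one]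
    rw [hEq]; ring
  have hhalf : (0:ℝ) < (N:ℝ) ^ t / (2 * ((k:ℝ) + 1)) := by positivity
  obtain ⟨b, hb⟩ :=
    (((h2.eventually_lt_const hhalf).and (h3.eventually_ge_atTop 1)).and
      (eventually_gt_atTop N)).exists
  obtain ⟨⟨hb2, hb3⟩, hbN⟩ := hb
  refine ⟨b, by omega, ⟨N, haN, hbN, ?_⟩, hb3⟩
  have hEq : (N:ℝ) ^ t / (2 * ((k:ℝ) + 1)) + (N:ℝ) ^ t / (2 * ((k:ℝ) + 1))
      = (N:ℝ) ^ t / ((k:ℝ) + 1) := by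
    field_simp; ring
  linarith

noncomputable def cseq {s t : ℝ} (hs : 0 < s) (hs1 : s < 1) (ht : 0 < t) (ht1 : t ≤ 1) : ℕ → ℕ
  | 0 => 1
  | k + 1 => (exists_step hs hs1 ht ht1 k (cseq hs hs1 ht ht1 k)).choose

section Cseq

variable {s t : ℝ} (hs : 0 < s) (hs1 : s < 1) (ht : 0 < t) (ht1 : t ≤ 1)

lemma cseq_spec (k : ℕ) :
    P s t k (cseq hs hs1 ht ht1 k) (cseq hs hs1 ht ht1 (k + 1)) :=
  (exists_step hs hs1 ht ht1 k (cseq hs hs1 ht ht1 k)).choose_spec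

lemma cseq_zero : cseq hs hs1 ht ht1 0 = 1 := rfl

lemma cseq_strictMono : StrictMono (cseq hs hs1 ht ht1) :=
  strictMono_nat_of_lt_succ (fun k => by have := (cseq_spec hs hs1 ht ht1 k).1; omega)

lemma cseq_ge (k : ℕ) : k + 1 ≤ cseq hs hs1 ht ht1 k := by
  induction k with
  | zero => simp [cseq_zero]
  | succ n ih => have := (cseq_spec hs hs1 ht ht1 n).1; omega

end Cseq

/-! ### The function `gg` and weights `W` for a milestone sequence `M` -/

def onIdx (M : ℕ → ℕ) (n : ℕ) : Prop := ∃ j, M (2 * j) ≤ n ∧ n ≤ M (2 * j + 1)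

lemma gset_nonempty {M : ℕ → ℕ} (hmono : Monotone M) (htop : ∀ n, ∃ j, n ≤ M (2 * j)) (n : ℕ) :
    {m | n ≤ m ∧ onIdx M m}.Nonempty := by
  obtain ⟨j, hj⟩ := htop n
  exact ⟨M (2 * j), hj, ⟨j, le_rfl, hmono (by omega)⟩⟩

noncomputable def gg (M : ℕ → ℕ) (n : ℕ) : ℕ := sInf {m | n ≤ m ∧ onIdx M m}

section GG

variable {M : ℕ → ℕ} (hmono : Monotone M) (h0 : M 0 = 1) (htop : ∀ n, ∃ j, n ≤ M (2 * j))
include hmono htop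

lemma gg_mem (n : ℕ) : n ≤ gg M n ∧ onIdx M (gg M n) :=
  Nat.sInf_mem (gset_nonempty hmono htop n)

lemma le_gg (n : ℕ) : n ≤ gg M n := (gg_mem hmono htop n).1

omit hmono htop in
lemma gg_le {n m : ℕ} (hm : n ≤ m) (h : onIdx M m) : gg M n ≤ m := Nat.sInf_le ⟨hm, h⟩

lemma gg_mono : Monotone (gg M) := by
  intro n n' h
  exact gg_le (h.trans (le_gg hmono htop n')) (gg_mem hmono htop n').2

include h0 in
lemma one_le_gg (n : ℕ) : 1 ≤ gg M n := by
  obtain ⟨j, hj1, _⟩ := (gg_mem hmono htop n).2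
  have : M 0 ≤ M (2 * j) := hmono (by omega)
  omega

lemma gg_eq_self {n : ℕ} (h : onIdx M n) : gg M n = n :=
  le_antisymm (gg_le le_rfl h) (le_gg hmono htop n)

lemma gg_gap {j n : ℕ} (h1 : M (2 * j + 1) < n) (h2 : n < M (2 * j + 2)) :
    gg M n = M (2 * j + 2) := by
  have hub : gg M n ≤ M (2 * j + 2) := by
    refine gg_le h2.le ⟨j + 1, ?_, ?_⟩
    · rw [show 2 * (j + 1) = 2 * j + 2 by ring]
    · have : M (2 * j + 2) ≤ M (2 * (j + 1) + 1) := hmono (by omega)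
      exact this
  refine le_antisymm hub ?_
  obtain ⟨hn, i, hi1, hi2⟩ := gg_mem hmono htop n
  by_contra hlt
  push_neg at hlt
  rcases le_or_gt i j with hij | hij
  · have : M (2 * i + 1) ≤ M (2 * j + 1) := hmono (by omega)
    omega
  · have : M (2 * j + 2) ≤ M (2 * i) := hmono (by omega)
    omega

end GG

noncomputable def W (s : ℝ) (M : ℕ → ℕ) (n : ℕ) : ℝ := (gg M n : ℝ) ^ (-s)

section Wsec

variable {s t : ℝ} {M : ℕ → ℕ}
variable (hmono : Monotone M) (h0 : M 0 = 1) (htop : ∀ n, ∃ j, n ≤ M (2 * j))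
include hmono h0 htop

lemma gg_cast_pos (n : ℕ) : (0:ℝ) < (gg M n : ℝ) := by
  have := one_le_gg hmono h0 htop n
  exact_mod_cast Nat.lt_of_lt_of_le Nat.zero_lt_one this

lemma W_pos (n : ℕ) : 0 < W s M n :=
  Real.rpow_pos_of_pos (gg_cast_pos hmono h0 htop n) _

lemma W_le_one (hs : 0 < s) (n : ℕ) : W s M n ≤ 1 := by
  apply Real.rpow_le_one_of_one_le_of_nonpos
  · exact_mod_cast one_le_gg hmono h0 htop n
  · linarith

lemma W_one : W s M 1 = 1 := by
  have h2 : (1:ℕ) ≤ M (2 * 0 + 1) := by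
    have h := hmono (Nat.zero_le (2 * 0 + 1))
    omega
  have h1 : M (2 * 0) ≤ 1 := by
    have : M (2 * 0) = M 0 := by norm_num
    omega
  have h : onIdx M 1 := ⟨0, h1, h2⟩
  rw [W, gg_eq_self hmono htop h]
  norm_num

lemma W_antitone (hs : 0 < s) : Antitone (W s M) := by
  intro n m h
  apply Real.rpow_le_rpow_of_nonpos (gg_cast_pos hmono h0 htop n)
  · exact_mod_cast gg_mono hmono htop h
  · linarith

omit h0 in
lemma W_tendsto (hs : 0 < s) : Tendsto (W s M) atTop (𝓝 0) := by
  have hg : Tendsto (fun n => (gg M n : ℝ)) atTop atTop :=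
    tendsto_natCast_atTop_atTop.comp
      (tendsto_atTop_mono (le_gg hmono htop) tendsto_id)
  exact (tendsto_rpow_neg_atTop hs).comp hg

omit h0 in
lemma W_eq_on {n : ℕ} (h : onIdx M n) : W s M n = (n : ℝ) ^ (-s) := by
  rw [W, gg_eq_self hmono htop h]

/-- divergence: partial sums are unbounded -/
lemma sum_W_ge (hs : 0 < s)
    (hdiv : ∀ j, M (2*j+1) + 1 < M (2*j+2) ∧
      1 ≤ ((M (2*j+2) : ℝ) - (M (2*j+1) : ℝ) - 1) * (M (2*j+2) : ℝ) ^ (-s)) :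
    ∀ K : ℕ, (K : ℝ) ≤ ∑ n ∈ Finset.Ioc 0 (M (2*K)), W s M n := by
  intro K
  induction K with
  | zero => simpa using Finset.sum_nonneg (fun n _ => (W_pos hmono h0 htop n).le)
  | succ K ih =>
    have h01 : M (2*K) ≤ M (2*K+1) := hmono (by omega)
    have h12 : M (2*K+1) + 1 < M (2*K+2) := (hdiv K).1
    have hsplit :
        (∑ n ∈ Finset.Ioc 0 (M (2*K)), W s M n) +
          ∑ n ∈ Finset.Ioc (M (2*K)) (M (2*(K+1))), W s M n
          = ∑ n ∈ Finset.Ioc 0 (M (2*(K+1))), W s M n := by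
      apply Finset.sum_Ioc_consecutive
      · omega
      · rw [show 2*(K+1) = 2*K+2 by ring]; omega
    have hsub : Finset.Ioo (M (2*K+1)) (M (2*K+2)) ⊆ Finset.Ioc (M (2*K)) (M (2*(K+1))) := by
      intro x hx
      rw [Finset.mem_Ioo] at hx
      rw [Finset.mem_Ioc, show 2*(K+1) = 2*K+2 by ring]
      omega
    have hgapsum : (1:ℝ) ≤ ∑ n ∈ Finset.Ioo (M (2*K+1)) (M (2*K+2)), W s M n := by
      have heach : ∀ n ∈ Finset.Ioo (M (2*K+1)) (M (2*K+2)),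
          W s M n = (M (2*K+2) : ℝ) ^ (-s) := by
        intro n hn
        rw [Finset.mem_Ioo] at hn
        rw [W, gg_gap hmono htop hn.1 hn.2]
      rw [Finset.sum_congr rfl heach, Finset.sum_const, Nat.card_Ioo, nsmul_eq_mul]
      have hle' : M (2*K+1) + 1 ≤ M (2*K+2) := by omega
      have hcast : ((M (2*K+2) - (M (2*K+1)) - 1 : ℕ) : ℝ)
          = (M (2*K+2) : ℝ) - (M (2*K+1) : ℝ) - 1 := by
        rw [Nat.sub_sub, Nat.cast_sub hle']
        push_cast
        ring
      rw [hcast]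
      exact (hdiv K).2
    have hmid : (1:ℝ) ≤ ∑ n ∈ Finset.Ioc (M (2*K)) (M (2*(K+1))), W s M n := by
      refine hgapsum.trans (Finset.sum_le_sum_of_subset_of_nonneg hsub ?_)
      exact fun n _ _ => (W_pos hmono h0 htop n).le
    push_cast
    rw [← hsplit]
    linarith

lemma not_summable_W (hs : 0 < s)
    (hdiv : ∀ j, M (2*j+1) + 1 < M (2*j+2) ∧
      1 ≤ ((M (2*j+2) : ℝ) - (M (2*j+1) : ℝ) - 1) * (M (2*j+2) : ℝ) ^ (-s)) :
    ¬ Summable (W s M) := by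
  intro h
  obtain ⟨K, hK⟩ := exists_nat_gt (∑' n, W s M n)
  have h1 := sum_W_ge hmono h0 htop hs hdiv K
  have h2 : ∑ n ∈ Finset.Ioc 0 (M (2*K)), W s M n ≤ ∑' n, W s M n :=
    Summable.sum_le_tsum _ (fun n _ => (W_pos hmono h0 htop n).le) h
  linarith

/-- the checkpoint bound -/
lemma sum_W_checkpoint (hs : 0 < s) {j N : ℕ}
    (h1 : M (2*j+1) < N) (h2 : N < M (2*j+2)) :
    ∑ n ∈ Finset.Icc 1 N, W s M n
      ≤ (M (2*j+1) : ℝ) + (N : ℝ) * (M (2*j+2) : ℝ) ^ (-s) := by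
  set a := M (2*j+1) with ha
  set b := M (2*j+2) with hb
  have hsplit : (∑ n ∈ Finset.Ioc 0 a, W s M n) + ∑ n ∈ Finset.Ioc a N, W s M n
      = ∑ n ∈ Finset.Ioc 0 N, W s M n :=
    Finset.sum_Ioc_consecutive _ (by omega) h1.le
  have hIcc : Finset.Icc 1 N = Finset.Ioc 0 N := by
    rw [← Finset.Icc_add_one_left_eq_Ioc, zero_add]
  have hS1 : ∑ n ∈ Finset.Ioc 0 a, W s M n ≤ (a : ℝ) := by
    have h := Finset.sum_le_card_nsmul (Finset.Ioc 0 a) (W s M) 1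
      (fun n _ => W_le_one hmono h0 htop hs n)
    simpa [Nat.card_Ioc] using h
  have hS2 : ∑ n ∈ Finset.Ioc a N, W s M n ≤ (N : ℝ) * (b : ℝ) ^ (-s) := by
    have heach : ∀ n ∈ Finset.Ioc a N, W s M n = (b : ℝ) ^ (-s) := by
      intro n hn
      rw [Finset.mem_Ioc] at hn
      rw [W, gg_gap hmono htop hn.1 (lt_of_le_of_lt hn.2 h2)]
    rw [Finset.sum_congr rfl heach, Finset.sum_const, Nat.card_Ioc, nsmul_eq_mul]
    have hbpos : (0:ℝ) ≤ (b:ℝ) ^ (-s) :=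
      (Real.rpow_pos_of_pos (by exact_mod_cast (by omega : 0 < b)) _).le
    apply mul_le_mul_of_nonneg_right _ hbpos
    exact_mod_cast Nat.sub_le N a
  rw [hIcc, ← hsplit]
  linarith

lemma liminf_W_zero (hs : 0 < s) (ht : 0 < t)
    (hMk : ∀ k, k ≤ M k)
    (hchk : ∀ j : ℕ, ∃ N : ℕ, M (2*j+1) < N ∧ N < M (2*j+2) ∧
      (M (2*j+1) : ℝ) + (N : ℝ) * (M (2*j+2) : ℝ) ^ (-s) ≤ (N : ℝ) ^ t / ((j : ℝ) + 1)) :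
    Filter.liminf (fun N : ℕ => (∑ n ∈ Finset.Icc 1 N, W s M n) / (N : ℝ) ^ t) atTop = 0 := by
  set f : ℕ → ℝ := fun N => (∑ n ∈ Finset.Icc 1 N, W s M n) / (N : ℝ) ^ t with hf
  have hf0 : ∀ N, 0 ≤ f N := by
    intro N
    apply div_nonneg
    · exact Finset.sum_nonneg (fun n _ => (W_pos hmono h0 htop n).le)
    · positivity
  have hle : ∀ j : ℕ, ∃ N : ℕ, j ≤ N ∧ f N ≤ 1 / ((j:ℝ) + 1) := by
    intro j
    obtain ⟨N, h1, h2, h3⟩ := hchk j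
    have hNj : j ≤ N := by have := hMk (2*j+1); omega
    have hN1 : (1:ℝ) ≤ (N:ℝ) := by
      have := hMk (2*j+1)
      have : 1 ≤ N := by omega
      exact_mod_cast this
    have hNtpos : (0:ℝ) < (N:ℝ) ^ t := Real.rpow_pos_of_pos (by linarith) t
    refine ⟨N, hNj, ?_⟩
    have hsum := sum_W_checkpoint hmono h0 htop hs h1 h2
    have hfle : f N ≤ ((N : ℝ) ^ t / ((j : ℝ) + 1)) / (N : ℝ) ^ t := by
      apply div_le_div_of_nonneg_right (le_trans hsum h3) hNtpos.le
    calc f N ≤ ((N : ℝ) ^ t / ((j : ℝ) + 1)) / (N : ℝ) ^ t := hfle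
      _ = (N : ℝ) ^ t / (N : ℝ) ^ t / ((j : ℝ) + 1) := by rw [div_right_comm]
      _ = 1 / ((j:ℝ) + 1) := by rw [div_self (ne_of_gt hNtpos)]
  have hfreq : ∀ j : ℕ, ∃ᶠ N in atTop, f N ≤ 1 / ((j:ℝ) + 1) := by
    intro j
    rw [frequently_atTop]
    intro m
    obtain ⟨N, hN1, hN2⟩ := hle (max j m)
    refine ⟨N, le_trans (le_max_right j m) hN1, hN2.trans ?_⟩
    apply one_div_le_one_div_of_le (by positivity)
    have : (j:ℝ) ≤ ((max j m : ℕ) : ℝ) := by exact_mod_cast le_max_left j m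
    linarith
  have hbdd : IsBoundedUnder (· ≥ ·) atTop f :=
    isBoundedUnder_of ⟨0, fun N => hf0 N⟩
  have hcob : IsCoboundedUnder (· ≥ ·) atTop f :=
    IsCoboundedUnder.of_frequently_le (hfreq 0)
  refine le_antisymm ?_ (le_liminf_of_le hcob (Eventually.of_forall hf0))
  by_contra hpos
  push_neg at hpos
  obtain ⟨j, hj⟩ := exists_nat_one_div_lt hpos
  have hll := liminf_le_of_frequently_le (hfreq j) hbdd
  linarith

end Wsec

end Stmt2Aux

/-- Fix `1 ≤ q < p < ∞` and set `s = 1/q - 1/p`.  There exist two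
nonincreasing positive sequences `w`, `w̃` (indexed by `n ≥ 1`) with `w 1 = w̃ 1 = 1`,
both tending to `0` and both with divergent series, such that (1) for every `n ≥ 1`,
either `w n = n^{-s}` or `w̃ n = n^{-s}`; and (2)
`liminf_N (∑_{n=1}^N w n)/N^{q/p} = 0` and likewise for `w̃`. -/
theorem stmt2 (p q : ℝ) (hq : 1 ≤ q) (hqp : q < p) :
    ∃ w w' : ℕ → ℝ,
      w 1 = 1 ∧ w' 1 = 1 ∧
      (∀ n : ℕ, 1 ≤ n → 0 < w n) ∧ (∀ n : ℕ, 1 ≤ n → 0 < w' n) ∧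
      AntitoneOn w (Set.Ici 1) ∧ AntitoneOn w' (Set.Ici 1) ∧
      Tendsto w atTop (𝓝 0) ∧ Tendsto w' atTop (𝓝 0) ∧
      ¬ Summable w ∧ ¬ Summable w' ∧
      (∀ n : ℕ, 1 ≤ n →
        w n = (n : ℝ) ^ (-(1 / q - 1 / p)) ∨ w' n = (n : ℝ) ^ (-(1 / q - 1 / p))) ∧
      Filter.liminf (fun N : ℕ => (∑ n ∈ Finset.Icc 1 N, w n) / (N : ℝ) ^ (q / p)) atTop = 0 ∧
      Filter.liminf (fun N : ℕ => (∑ n ∈ Finset.Icc 1 N, w' n) / (N : ℝ) ^ (q / p)) atTop = 0 := by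
  have hq0 : 0 < q := lt_of_lt_of_le zero_lt_one hq
  have hp0 : 0 < p := hq0.trans hqp
  set s : ℝ := 1 / q - 1 / p with hsdef
  set t : ℝ := q / p with htdef
  have hs : 0 < s := sub_pos.mpr (one_div_lt_one_div_of_lt hq0 hqp)
  have hs1 : s < 1 := by
    have h1 : 1 / q ≤ 1 := by rw [div_le_one hq0]; exact hq
    have h2 : 0 < 1 / p := by positivity
    rw [hsdef]; linarith
  have ht : 0 < t := by rw [htdef]; positivity
  have ht1 : t ≤ 1 := by rw [htdef, div_le_one hp0]; exact hqp.le
  set c : ℕ → ℕ := Stmt2Aux.cseq hs hs1 ht ht1 with hc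
  have hcmono : StrictMono c := Stmt2Aux.cseq_strictMono hs hs1 ht ht1
  have hc0 : c 0 = 1 := Stmt2Aux.cseq_zero hs hs1 ht ht1
  have hcge : ∀ k, k + 1 ≤ c k := Stmt2Aux.cseq_ge hs hs1 ht ht1
  have hcspec : ∀ k, Stmt2Aux.P s t k (c k) (c (k + 1)) := Stmt2Aux.cseq_spec hs hs1 ht ht1
  obtain ⟨M1, hM1⟩ : ∃ f : ℕ → ℕ, ∀ k, f k = c (k - 1) :=
    ⟨fun k => c (k - 1), fun _ => rfl⟩
  have hmono0 : Monotone c := hcmono.monotone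
  have hmono1 : Monotone M1 := fun a b h => by
    rw [hM1, hM1]; exact hcmono.monotone (by omega)
  have h00 : c 0 = 1 := hc0
  have h01 : M1 0 = 1 := by rw [hM1]; exact hc0
  have htop0 : ∀ n, ∃ j, n ≤ c (2 * j) := by
    intro n
    exact ⟨n, by have := hcge (2 * n); omega⟩
  have htop1 : ∀ n, ∃ j, n ≤ M1 (2 * j) := by
    intro n
    refine ⟨n + 1, ?_⟩
    rw [hM1]
    have := hcge (2 * (n + 1) - 1)
    omega
  have hMk0 : ∀ k, k ≤ c k := fun k => by have := hcge k; omega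
  have hMk1 : ∀ k, k ≤ M1 k := fun k => by
    rw [hM1]; have := hcge (k - 1); omega
  -- index rewriting for M1
  have hM1idx : ∀ j : ℕ, M1 (2*j+1) = c (2*j) ∧ M1 (2*j+2) = c (2*j+1) := by
    intro j
    constructor <;> (rw [hM1]; exact congrArg c (by omega))
  have hdiv0 : ∀ j, c (2*j+1) + 1 < c (2*j+2) ∧
      1 ≤ ((c (2*j+2) : ℝ) - (c (2*j+1) : ℝ) - 1) * (c (2*j+2) : ℝ) ^ (-s) := by
    intro j
    have h := hcspec (2*j+1)
    rw [show 2*j+1+1 = 2*j+2 by ring] at h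
    exact ⟨by have := h.1; omega, h.2.2⟩
  have hdiv1 : ∀ j, M1 (2*j+1) + 1 < M1 (2*j+2) ∧
      1 ≤ ((M1 (2*j+2) : ℝ) - (M1 (2*j+1) : ℝ) - 1) * (M1 (2*j+2) : ℝ) ^ (-s) := by
    intro j
    have h := hcspec (2*j)
    rw [(hM1idx j).1, (hM1idx j).2]
    exact ⟨by have := h.1; omega, h.2.2⟩
  have hchk0 : ∀ j : ℕ, ∃ N : ℕ, c (2*j+1) < N ∧ N < c (2*j+2) ∧
      (c (2*j+1) : ℝ) + (N : ℝ) * (c (2*j+2) : ℝ) ^ (-s) ≤ (N : ℝ) ^ t / ((j : ℝ) + 1) := by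
    intro j
    have h := hcspec (2*j+1)
    rw [show 2*j+1+1 = 2*j+2 by ring] at h
    obtain ⟨N, hN1, hN2, hN3⟩ := h.2.1
    refine ⟨N, hN1, hN2, ?_⟩
    have hstep : (N : ℝ) ^ t / (((2*j+1 : ℕ) : ℝ) + 1) ≤ (N : ℝ) ^ t / ((j : ℝ) + 1) := by
      apply div_le_div_of_nonneg_left (Real.rpow_nonneg (Nat.cast_nonneg N) t) (by positivity)
      push_cast; linarith [Nat.cast_nonneg (α := ℝ) j]
    exact le_trans hN3 hstep
  have hchk1 : ∀ j : ℕ, ∃ N : ℕ, M1 (2*j+1) < N ∧ N < M1 (2*j+2) ∧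
      (M1 (2*j+1) : ℝ) + (N : ℝ) * (M1 (2*j+2) : ℝ) ^ (-s) ≤ (N : ℝ) ^ t / ((j : ℝ) + 1) := by
    intro j
    obtain ⟨N, hN1, hN2, hN3⟩ := (hcspec (2*j)).2.1
    rw [(hM1idx j).1, (hM1idx j).2]
    refine ⟨N, hN1, hN2, ?_⟩
    have hstep : (N : ℝ) ^ t / (((2*j : ℕ) : ℝ) + 1) ≤ (N : ℝ) ^ t / ((j : ℝ) + 1) := by
      apply div_le_div_of_nonneg_left (Real.rpow_nonneg (Nat.cast_nonneg N) t) (by positivity)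
      push_cast; linarith [Nat.cast_nonneg (α := ℝ) j]
    exact le_trans hN3 hstep
  -- coverage
  have hcover : ∀ n : ℕ, 1 ≤ n → Stmt2Aux.onIdx c n ∨ Stmt2Aux.onIdx M1 n := by
    intro n hn
    have hex : ∃ k, n < c k := ⟨n, by have := hcge n; omega⟩
    have hklt : n < c (Nat.find hex) := Nat.find_spec hex
    set k := Nat.find hex with hk
    have hkpos : 0 < k := by
      rcases Nat.eq_zero_or_pos k with h | h
      · exfalso; rw [h, hc0] at hklt; omega
      · exact h
    have hlek : c (k - 1) ≤ n := by
      have h := Nat.find_min hex (m := k - 1) (by omega)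
      omega
    rcases Nat.even_or_odd (k - 1) with ⟨m, hm⟩ | ⟨m, hm⟩
    · left
      refine ⟨m, ?_, ?_⟩
      · rw [show 2 * m = k - 1 by omega]; exact hlek
      · rw [show 2 * m + 1 = k by omega]; exact hklt.le
    · right
      refine ⟨m + 1, ?_, ?_⟩
      · rw [show M1 (2 * (m + 1)) = c (k - 1) by rw [hM1]; exact congrArg c (by omega)]
        exact hlek
      · rw [show M1 (2 * (m + 1) + 1) = c k by rw [hM1]; exact congrArg c (by omega)]
        exact hklt.le
  refine ⟨Stmt2Aux.W s c, Stmt2Aux.W s M1,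
    Stmt2Aux.W_one hmono0 h00 htop0,
    Stmt2Aux.W_one hmono1 h01 htop1,
    fun n _ => Stmt2Aux.W_pos hmono0 h00 htop0 n,
    fun n _ => Stmt2Aux.W_pos hmono1 h01 htop1 n,
    ((Stmt2Aux.W_antitone hmono0 h00 htop0 hs).antitoneOn _),
    ((Stmt2Aux.W_antitone hmono1 h01 htop1 hs).antitoneOn _),
    Stmt2Aux.W_tendsto hmono0 htop0 hs,
    Stmt2Aux.W_tendsto hmono1 htop1 hs,
    Stmt2Aux.not_summable_W hmono0 h00 htop0 hs hdiv0,
    Stmt2Aux.not_summable_W hmono1 h01 htop1 hs hdiv1,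
    ?_, ?_, ?_⟩
  · intro n hn
    rcases hcover n hn with h | h
    · exact Or.inl (Stmt2Aux.W_eq_on hmono0 htop0 h)
    · exact Or.inr (Stmt2Aux.W_eq_on hmono1 htop1 h)
  · exact Stmt2Aux.liminf_W_zero hmono0 h00 htop0 hs ht hMk0 hchk0
  · exact Stmt2Aux.liminf_W_zero hmono1 h01 htop1 hs ht hMk1 hchk1
end

section
/- Let 1 ≤ ξ ≤ ω₁ and let A ∈ S_ξ be an element of the ξ-th Schreier family. Then the set {2n : n ∈ A} ∪ {2n+2 : n ∈ A} also belongs to S_ξ. -/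
open Ordinal Filter Topology

/-- A system of Schreier families `S ξ` for ordinals `ξ ≤ ω₁`, satisfying the usual
inductive definition (with some fixed choice of cofinal sequences at limit ordinals),
and with `S ξ` equal to the family of all finite subsets of `ℕ` for `ξ = ω₁`. -/
structure SchreierSystem where
  S : Ordinal → Set (Finset ℕ)
  zero : S 0 = {F : Finset ℕ | F.card ≤ 1}
  succ : ∀ ζ : Ordinal, ζ < ω₁ → S (ζ + 1) =
    {F : Finset ℕ | F = ∅ ∨ ∃ (n : ℕ) (f : Fin n → Finset ℕ),
      (∀ i, f i ∈ S ζ) ∧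
      (∀ i j : Fin n, i < j → ∀ a ∈ f i, ∀ b ∈ f j, a < b) ∧
      (∀ a ∈ F, n ≤ a) ∧
      F = Finset.univ.biUnion f}
  limit : ∀ ξ : Ordinal, Order.IsSuccLimit ξ → ξ < ω₁ →
    ∃ ζs : ℕ → Ordinal, StrictMono ζs ∧ (∀ n, ¬ Order.IsSuccLimit (ζs n)) ∧ (⨆ n, ζs n) = ξ ∧
      S ξ = {F : Finset ℕ | ∃ n : ℕ, F ∈ S (ζs n) ∧ ∀ a ∈ F, n + 1 ≤ a}
  top : ∀ ξ : Ordinal, ω₁ ≤ ξ → S ξ = Set.univ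

namespace SchreierSystem

private lemma ord_lt_add_one (ζ : Ordinal) : ζ < ζ + 1 := by
  rw [Ordinal.add_one_eq_succ]; exact Order.lt_succ ζ

private lemma sup_lt_aux {ζs : ℕ → Ordinal} (h : StrictMono ζs) {ξ : Ordinal}
    (hsup : (⨆ n, ζs n) = ξ) (n : ℕ) : ζs n < ξ := by
  calc ζs n < ζs (n+1) := h (Nat.lt_succ_self n)
    _ ≤ ⨆ n, ζs n := le_ciSup (Ordinal.bddAbove_range _) (n+1)
    _ = ξ := hsup

lemma empty_mem (𝒮 : SchreierSystem) : ∀ ζ : Ordinal, (∅ : Finset ℕ) ∈ 𝒮.S ζ := by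
  intro ζ
  induction ζ using Ordinal.induction with
  | h ζ IH =>
  rcases le_or_gt ω₁ ζ with hζ | hζ
  · rw [𝒮.top ζ hζ]; trivial
  rcases Ordinal.zero_or_succ_or_isSuccLimit ζ with rfl | ⟨ζ', hs⟩ | hlim
  · rw [𝒮.zero]; simp
  · rw [← Ordinal.add_one_eq_succ] at hs; subst hs
    rw [𝒮.succ ζ' (lt_trans (ord_lt_add_one ζ') hζ)]
    exact Or.inl rfl
  · obtain ⟨ζs, hmono, _, hsup, hS⟩ := 𝒮.limit ζ hlim hζ
    rw [hS]
    exact ⟨0, IH _ (sup_lt_aux hmono hsup 0), by simp⟩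

lemma singleton_mem (𝒮 : SchreierSystem) : ∀ ζ : Ordinal, ∀ x : ℕ, 1 ≤ x →
    ({x} : Finset ℕ) ∈ 𝒮.S ζ := by
  intro ζ
  induction ζ using Ordinal.induction with
  | h ζ IH =>
  intro x hx
  rcases le_or_gt ω₁ ζ with hζ | hζ
  · rw [𝒮.top ζ hζ]; trivial
  rcases Ordinal.zero_or_succ_or_isSuccLimit ζ with rfl | ⟨ζ', hs⟩ | hlim
  · rw [𝒮.zero]; simp
  · rw [← Ordinal.add_one_eq_succ] at hs; subst hs
    rw [𝒮.succ ζ' (lt_trans (ord_lt_add_one ζ') hζ)]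
    refine Or.inr ⟨1, fun _ => {x}, fun _ => IH ζ' (ord_lt_add_one ζ') x hx, ?_, ?_, ?_⟩
    · intro i j hij a _ b _
      exact absurd (Subsingleton.elim i j) hij.ne
    · intro a ha; rw [Finset.mem_singleton] at ha; omega
    · simp
  · obtain ⟨ζs, hmono, _, hsup, hS⟩ := 𝒮.limit ζ hlim hζ
    rw [hS]
    refine ⟨0, IH _ (sup_lt_aux hmono hsup 0) x hx, ?_⟩
    intro a ha; rw [Finset.mem_singleton] at ha; omega

lemma hered (𝒮 : SchreierSystem) : ∀ ζ : Ordinal, ∀ F ∈ 𝒮.S ζ, ∀ G ⊆ F, G ∈ 𝒮.S ζ := by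
  intro ζ
  induction ζ using Ordinal.induction with
  | h ζ IH =>
  intro F hF G hG
  rcases le_or_gt ω₁ ζ with hζ | hζ
  · rw [𝒮.top ζ hζ]; trivial
  rcases Ordinal.zero_or_succ_or_isSuccLimit ζ with rfl | ⟨ζ', hs⟩ | hlim
  · rw [𝒮.zero] at hF ⊢
    exact le_trans (Finset.card_le_card hG) hF
  · rw [← Ordinal.add_one_eq_succ] at hs; subst hs
    rw [𝒮.succ ζ' (lt_trans (ord_lt_add_one ζ') hζ)] at hF ⊢
    rcases hF with rfl | ⟨n, f, hf, hord, hmin, hFe⟩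
    · exact Or.inl (Finset.subset_empty.1 hG)
    refine Or.inr ⟨n, fun i => f i ∩ G, ?_, ?_, ?_, ?_⟩
    · intro i
      exact IH ζ' (ord_lt_add_one ζ') (f i) (hf i) _ Finset.inter_subset_left
    · intro i j hij a ha b hb
      exact hord i j hij a (Finset.mem_inter.1 ha).1 b (Finset.mem_inter.1 hb).1
    · intro a ha; exact hmin a (hG ha)
    · ext b
      simp only [Finset.mem_biUnion, Finset.mem_univ, true_and, Finset.mem_inter]
      constructor
      · intro hb
        have hbF := hG hb
        rw [hFe] at hbF
        obtain ⟨i, _, hi⟩ := Finset.mem_biUnion.1 hbF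
        exact ⟨i, hi, hb⟩
      · rintro ⟨i, _, hb⟩; exact hb
  · obtain ⟨ζs, hmono, _, hsup, hS⟩ := 𝒮.limit ζ hlim hζ
    rw [hS] at hF ⊢
    obtain ⟨n, h1, h2⟩ := hF
    exact ⟨n, IH (ζs n) (sup_lt_aux hmono hsup n) _ h1 G hG,
      fun a ha => h2 a (hG ha)⟩

lemma mem_succ_of_card_le (𝒮 : SchreierSystem) {ζ' : Ordinal} (hζ' : ζ' < ω₁)
    (F : Finset ℕ) (hF : ∀ a ∈ F, F.card ≤ a) : F ∈ 𝒮.S (ζ' + 1) := by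
  rw [𝒮.succ ζ' hζ']
  refine Or.inr ⟨F.card, fun i => {(F.orderIsoOfFin rfl i : ℕ)}, ?_, ?_, hF, ?_⟩
  · intro i
    refine 𝒮.singleton_mem ζ' _ ?_
    exact le_trans i.pos (hF _ (F.orderIsoOfFin rfl i).2)
  · intro i j hij a ha b hb
    rw [Finset.mem_singleton] at ha hb
    subst ha; subst hb
    exact Subtype.coe_lt_coe.2 ((F.orderIsoOfFin rfl).strictMono hij)
  · ext b
    simp only [Finset.mem_biUnion, Finset.mem_univ, true_and, Finset.mem_singleton]
    constructor
    · intro hb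
      obtain ⟨i, hi⟩ := (F.orderIsoOfFin rfl).surjective ⟨b, hb⟩
      exact ⟨i, by rw [hi]⟩
    · rintro ⟨i, rfl⟩
      exact (F.orderIsoOfFin rfl i).2

lemma mem_of_card_le (𝒮 : SchreierSystem) (ζ : Ordinal) (h1 : 1 ≤ ζ)
    (F : Finset ℕ) (hF : ∀ a ∈ F, F.card ≤ a) : F ∈ 𝒮.S ζ := by
  rcases le_or_gt ω₁ ζ with hζ | hζ
  · rw [𝒮.top ζ hζ]; trivial
  rcases Ordinal.zero_or_succ_or_isSuccLimit ζ with rfl | ⟨ζ', hs⟩ | hlim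
  · exact absurd h1 (by simp)
  · rw [← Ordinal.add_one_eq_succ] at hs; subst hs
    exact 𝒮.mem_succ_of_card_le (lt_trans (ord_lt_add_one ζ') hζ) F hF
  · obtain ⟨ζs, hmono, hnl, hsup, hS⟩ := 𝒮.limit ζ hlim hζ
    rw [hS]
    rcases F.eq_empty_or_nonempty with rfl | hne
    · exact ⟨0, 𝒮.empty_mem _, by simp⟩
    have hcpos : 1 ≤ F.card := Finset.card_pos.2 hne
    refine ⟨F.card - 1, ?_, fun a ha => by have := hF a ha; omega⟩
    rcases Nat.lt_or_ge (F.card - 1) 1 with hn | hn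
    · have hc1 : F.card = 1 := by omega
      obtain ⟨x, rfl⟩ := Finset.card_eq_one.1 hc1
      have hx : 1 ≤ x := by
        have := hF x (Finset.mem_singleton_self x); omega
      exact 𝒮.singleton_mem _ x hx
    · have hpos : 0 < ζs (F.card - 1) := by
        calc (0:Ordinal) ≤ ζs 0 := zero_le (a := ζs 0)
          _ < ζs (F.card - 1) := hmono (by omega)
      rcases Ordinal.zero_or_succ_or_isSuccLimit (ζs (F.card - 1)) with h0 | ⟨ζ'', hs'⟩ | hl
      · rw [h0] at hpos; exact absurd hpos (lt_irrefl 0)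
      · rw [← Ordinal.add_one_eq_succ] at hs'; rw [← hs']
        have : ζ'' < ω₁ := by
          have h1 : ζs (F.card - 1) < ζ := sup_lt_aux hmono hsup _
          rw [← hs'] at h1
          exact lt_trans (lt_trans (ord_lt_add_one ζ'') h1) hζ
        exact 𝒮.mem_succ_of_card_le this F hF
      · exact absurd hl (hnl _)

/-- The doubled set. -/
def dbl (A : Finset ℕ) : Finset ℕ :=
  (A.image fun n => 2 * n) ∪ (A.image fun n => 2 * n + 2)

lemma mem_dbl {A : Finset ℕ} {b : ℕ} : b ∈ dbl A ↔ ∃ x ∈ A, b = 2 * x ∨ b = 2 * x + 2 := by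
  simp only [dbl, Finset.mem_union, Finset.mem_image]
  constructor
  · rintro (⟨x, hx, rfl⟩ | ⟨x, hx, rfl⟩)
    exacts [⟨x, hx, Or.inl rfl⟩, ⟨x, hx, Or.inr rfl⟩]
  · rintro ⟨x, hx, rfl | rfl⟩
    exacts [Or.inl ⟨x, hx, rfl⟩, Or.inr ⟨x, hx, rfl⟩]

lemma card_dbl_le (A : Finset ℕ) : (dbl A).card ≤ 2 * A.card := by
  calc (dbl A).card ≤ (A.image fun n => 2 * n).card + (A.image fun n => 2 * n + 2).card :=
        Finset.card_union_le _ _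
    _ ≤ A.card + A.card := Nat.add_le_add (Finset.card_image_le) (Finset.card_image_le)
    _ = 2 * A.card := by omega

lemma dbl_mem (𝒮 : SchreierSystem) : ∀ ξ : Ordinal, 1 ≤ ξ → ξ ≤ ω₁ →
    ∀ A ∈ 𝒮.S ξ, dbl A ∈ 𝒮.S ξ := by
  intro ξ
  induction ξ using Ordinal.induction with
  | h ξ IH =>
  intro hξ1 hξ A hA
  rcases le_or_gt ω₁ ξ with h | hξlt
  · rw [𝒮.top ξ h]; trivial
  rcases Ordinal.zero_or_succ_or_isSuccLimit ξ with rfl | ⟨ζ, hs⟩ | hlim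
  · exact absurd hξ1 (by simp)
  · rw [← Ordinal.add_one_eq_succ] at hs; subst hs
    have hζω : ζ < ω₁ := lt_trans (ord_lt_add_one ζ) hξlt
    rw [𝒮.succ ζ hζω] at hA
    rcases hA with rfl | ⟨n, f, hf, hord, hmin, hAe⟩
    · have : dbl ∅ = ∅ := by simp [dbl]
      rw [this]; exact 𝒮.empty_mem _
    rcases eq_zero_or_pos ζ with rfl | hζpos
    · -- ξ = 1 case
      have hcard : A.card ≤ n := by
        rw [hAe]
        calc (Finset.univ.biUnion f).card ≤ ∑ i, (f i).card := Finset.card_biUnion_le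
          _ ≤ ∑ _i : Fin n, 1 := Finset.sum_le_sum (fun i _ => by
              have := hf i; rw [𝒮.zero] at this; exact this)
          _ = n := by simp
      rw [zero_add]
      refine 𝒮.mem_of_card_le 1 le_rfl _ ?_
      intro b hb
      obtain ⟨x, hx, hbx⟩ := mem_dbl.1 hb
      have hnx : n ≤ x := hmin x hx
      have := card_dbl_le A
      omega
    · -- successor case with ζ ≥ 1
      rw [𝒮.succ ζ hζω]
      refine Or.inr ⟨n, fun i => dbl (f i) \
        ((Finset.univ.filter (fun j => i < j)).biUnion fun j => dbl (f j)), ?_, ?_, ?_, ?_⟩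
      · intro i
        refine 𝒮.hered ζ (dbl (f i)) ?_ _ Finset.sdiff_subset
        exact IH ζ (ord_lt_add_one ζ) (Order.one_le_iff_pos.2 hζpos) hζω.le (f i) (hf i)
      · intro i j hij a ha b hb
        rw [Finset.mem_sdiff] at ha hb
        obtain ⟨x, hx, hax⟩ := mem_dbl.1 ha.1
        obtain ⟨y, hy, hby⟩ := mem_dbl.1 hb.1
        have hxy : x < y := hord i j hij x hx y hy
        have hab : a ≤ b := by omega
        rcases eq_or_lt_of_le hab with rfl | h
        · exfalso
          exact ha.2 (Finset.mem_biUnion.2 ⟨j, Finset.mem_filter.2 ⟨Finset.mem_univ j, hij⟩, hb.1⟩)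
        · exact h
      · intro a ha
        obtain ⟨x, hx, hax⟩ := mem_dbl.1 ha
        have := hmin x hx; omega
      · ext b
        simp only [Finset.mem_biUnion, Finset.mem_univ, true_and]
        constructor
        · intro hb
          have hsne : (Finset.univ.filter (fun i => b ∈ dbl (f i)) : Finset (Fin n)).Nonempty := by
            obtain ⟨x, hx, hbx⟩ := mem_dbl.1 hb
            rw [hAe] at hx
            obtain ⟨i, _, hxi⟩ := Finset.mem_biUnion.1 hx
            exact ⟨i, Finset.mem_filter.2 ⟨Finset.mem_univ i, mem_dbl.2 ⟨x, hxi, hbx⟩⟩⟩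
          set i₀ := (Finset.univ.filter (fun i => b ∈ dbl (f i))).max' hsne with hi₀
          refine ⟨i₀, Finset.mem_sdiff.2 ⟨(Finset.mem_filter.1
            ((Finset.univ.filter (fun i => b ∈ dbl (f i))).max'_mem hsne)).2, ?_⟩⟩
          intro hmem
          obtain ⟨j, hjf, hbj⟩ := Finset.mem_biUnion.1 hmem
          have hij : i₀ < j := (Finset.mem_filter.1 hjf).2
          have hjle : j ≤ i₀ := Finset.le_max' _ j (Finset.mem_filter.2 ⟨Finset.mem_univ j, hbj⟩)
          exact absurd hij (not_lt.2 hjle)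
        · rintro ⟨i, hbi⟩
          have hb : b ∈ dbl (f i) := (Finset.mem_sdiff.1 hbi).1
          obtain ⟨x, hxi, hbx⟩ := mem_dbl.1 hb
          refine mem_dbl.2 ⟨x, ?_, hbx⟩
          rw [hAe]
          exact Finset.mem_biUnion.2 ⟨i, Finset.mem_univ i, hxi⟩
  · -- limit case
    obtain ⟨ζs, hmono, hnl, hsup, hS⟩ := 𝒮.limit ξ hlim hξlt
    rw [hS] at hA ⊢
    obtain ⟨n, hAn, hminA⟩ := hA
    have hlt : ∀ m, ζs m < ξ := sup_lt_aux hmono hsup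
    rcases eq_zero_or_pos (ζs n) with h0 | hpos
    · have hc : A.card ≤ 1 := by rw [h0, 𝒮.zero] at hAn; exact hAn
      have hcd : (dbl A).card ≤ 2 := le_trans (card_dbl_le A) (by omega)
      refine ⟨n + 1, 𝒮.mem_of_card_le _ ?_ _ ?_, ?_⟩
      · rw [Order.one_le_iff_pos, ← h0]
        exact hmono (Nat.lt_succ_self n)
      · intro b hb
        obtain ⟨x, hx, hbx⟩ := mem_dbl.1 hb
        have := hminA x hx; omega
      · intro b hb
        obtain ⟨x, hx, hbx⟩ := mem_dbl.1 hb
        have := hminA x hx; omega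
    · refine ⟨n, IH (ζs n) (hlt n) (Order.one_le_iff_pos.2 hpos) ((hlt n).le.trans hξ) A hAn, ?_⟩
      intro b hb
      obtain ⟨x, hx, hbx⟩ := mem_dbl.1 hb
      have := hminA x hx; omega

end SchreierSystem

/-- Let `1 ≤ ξ ≤ ω₁` and `A ∈ S_ξ`.  Then
`{2n : n ∈ A} ∪ {2n+2 : n ∈ A} ∈ S_ξ`. -/
theorem stmt3 (𝒮 : SchreierSystem) (ξ : Ordinal) (hξ1 : 1 ≤ ξ) (hξ : ξ ≤ ω₁)
    (A : Finset ℕ) (hA : A ∈ 𝒮.S ξ) :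
    (A.image fun n => 2 * n) ∪ (A.image fun n => 2 * n + 2) ∈ 𝒮.S ξ :=
  𝒮.dbl_mem ξ hξ1 hξ A hA
end

section
/- Let X and Y be Banach spaces and T ∈ L(X,Y). If (x_n) is a bounded sequence in X, then there exists a subsequence (x_{n_k}) so that exactly one of the following holds: (a) (T x_{n_k}) is norm-convergent; (b) the difference sequences (x_{n_{4k+2}} − x_{n_{4k}}) and (T x_{n_{4k+2}} − T x_{n_{4k}}) are both seminormalized basic sequences, and each of them is either weakly null or equivalent to the canonical basis of ℓ₁. -/
open Filter Topology

/-- `x` is a basic sequence: nonzero terms whose partial-sum projections are uniformly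
bounded (the standard Grunblum criterion for being a Schauder basis of the closed span). -/
def IsBasicSeq {X : Type*} [NormedAddCommGroup X] [NormedSpace ℝ X] (x : ℕ → X) : Prop :=
  (∀ n, x n ≠ 0) ∧ ∃ K : ℝ, 1 ≤ K ∧ ∀ (a : ℕ → ℝ) (m n : ℕ), m ≤ n →
    ‖∑ i ∈ Finset.range m, a i • x i‖ ≤ K * ‖∑ i ∈ Finset.range n, a i • x i‖

/-- `x` dominates `y`: `‖∑ a n • y n‖ ≤ C ‖∑ a n • x n‖` for all finitely supported scalars. -/
def Dominates {X Y : Type*} [NormedAddCommGroup X] [NormedSpace ℝ X]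
    [NormedAddCommGroup Y] [NormedSpace ℝ Y] (x : ℕ → X) (y : ℕ → Y) : Prop :=
  ∃ C : ℝ, 0 < C ∧ ∀ (a : ℕ → ℝ) (F : Finset ℕ),
    ‖∑ n ∈ F, a n • y n‖ ≤ C * ‖∑ n ∈ F, a n • x n‖

/-- `e` has the norm of the canonical basis of `ℓ_p`. -/
def IsLpBasis (p : ℝ) {E : Type*} [NormedAddCommGroup E] [NormedSpace ℝ E]
    (e : ℕ → E) : Prop :=
  ∀ (a : ℕ → ℝ) (F : Finset ℕ),
    ‖∑ n ∈ F, a n • e n‖ = (∑ n ∈ F, |a n| ^ p) ^ (1 / p)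

/-- `e` has the norm of the canonical basis of `c₀`. -/
def IsC0Basis {E : Type*} [NormedAddCommGroup E] [NormedSpace ℝ E] (e : ℕ → E) : Prop :=
  ∀ (a : ℕ → ℝ) (F : Finset ℕ),
    ‖∑ n ∈ F, a n • e n‖ = ((F.sup fun n => ‖a n‖₊ : NNReal) : ℝ)

/-- A sequence is seminormalized if its norms are bounded above and away from zero. -/
def Seminormalized {X : Type*} [NormedAddCommGroup X] (x : ℕ → X) : Prop :=
  ∃ c C : ℝ, 0 < c ∧ ∀ n, c ≤ ‖x n‖ ∧ ‖x n‖ ≤ C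

/-- A sequence is weakly null if `f (x n) → 0` for every continuous functional `f`. -/
def WeaklyNull {X : Type*} [NormedAddCommGroup X] [NormedSpace ℝ X] (x : ℕ → X) : Prop :=
  ∀ f : X →L[ℝ] ℝ, Tendsto (fun n => f (x n)) atTop (𝓝 0)

/-- A sequence is equivalent to the canonical basis of `ℓ₁`. -/
def EquivL1Basis {X : Type*} [NormedAddCommGroup X] [NormedSpace ℝ X] (x : ℕ → X) : Prop :=
  ∃ c C : ℝ, 0 < c ∧ ∀ (a : ℕ → ℝ) (F : Finset ℕ),
    c * ∑ n ∈ F, |a n| ≤ ‖∑ n ∈ F, a n • x n‖ ∧ ‖∑ n ∈ F, a n • x n‖ ≤ C * ∑ n ∈ F, |a n|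


namespace Stmt7Aux
open Set Metric

/-- `E` is a (finite) initial segment of `L`. -/
def InitSeg (E : Finset ℕ) (L : Set ℕ) : Prop :=
  ↑E ⊆ L ∧ ∀ x ∈ L, x ∉ E → ∀ y ∈ E, y < x

variable (𝓕 : Finset ℕ → Prop)

def Accepts (F : Finset ℕ) (M : Set ℕ) : Prop :=
  ∀ L ⊆ M, L.Infinite → ∃ E : Finset ℕ, InitSeg E L ∧ 𝓕 (F ∪ E)

def Rejects (F : Finset ℕ) (M : Set ℕ) : Prop :=
  ∀ L ⊆ M, L.Infinite → ¬ Accepts 𝓕 F L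

variable {𝓕}

lemma Accepts.mono {F M L} (h : Accepts 𝓕 F M) (hL : L ⊆ M) : Accepts 𝓕 F L :=
  fun L' hL' => h L' (hL'.trans hL)

lemma Rejects.mono {F M L} (h : Rejects 𝓕 F M) (hL : L ⊆ M) : Rejects 𝓕 F L :=
  fun L' hL' => h L' (hL'.trans hL)

lemma accepts_of_mem {F : Finset ℕ} (h : 𝓕 F) (M : Set ℕ) : Accepts 𝓕 F M :=
  fun _L _hL _hinf => ⟨∅, ⟨by simp, by simp⟩, by simpa⟩

lemma Rejects.not_accepts {F M} (h : Rejects 𝓕 F M) (hM : M.Infinite) : ¬ Accepts 𝓕 F M :=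
  h M subset_rfl hM

lemma exists_accepts_or_rejects (F : Finset ℕ) (M : Set ℕ) (hM : M.Infinite) :
    ∃ L ⊆ M, L.Infinite ∧ (Accepts 𝓕 F L ∨ Rejects 𝓕 F L) := by
  by_cases h : Rejects 𝓕 F M
  · exact ⟨M, subset_rfl, hM, Or.inr h⟩
  · unfold Rejects at h
    push_neg at h
    obtain ⟨L, hLM, hLinf, hacc⟩ := h
    exact ⟨L, hLM, hLinf, Or.inl hacc⟩

/-- Key diagonal lemma of combinatorial forcing. -/
lemma Rejects.key {F : Finset ℕ} {M : Set ℕ} (hM : M.Infinite) (hrej : Rejects 𝓕 F M) :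
    ∃ M', M' ⊆ M ∧ M'.Infinite ∧ ∀ n ∈ M', Rejects 𝓕 (insert n F) M' := by
  by_contra hcon
  push_neg at hcon
  -- every infinite M' ⊆ M contains n with ¬ Rejects (insert n F) M'
  have step : ∀ M', M' ⊆ M → M'.Infinite →
      ∃ n M'', n ∈ M' ∧ M'' ⊆ M' ∧ M''.Infinite ∧ Accepts 𝓕 (insert n F) M'' ∧
        ∀ m ∈ M'', n < m := by
    intro M' hM' hinf
    obtain ⟨n, hn, hnrej⟩ := hcon M' hM' hinf
    unfold Rejects at hnrej
    push_neg at hnrej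
    obtain ⟨M'', hM''1, hM''2, hacc⟩ := hnrej
    refine ⟨n, M'' \ Iic n, hn, (diff_subset).trans hM''1, hM''2.diff (finite_Iic n),
      hacc.mono diff_subset, ?_⟩
    intro m hm
    simpa using hm.2
  -- build the sequence of states
  let S := {s : ℕ × Set ℕ // s.2 ⊆ M ∧ s.2.Infinite ∧ Accepts 𝓕 (insert s.1 F) s.2 ∧
    ∀ m ∈ s.2, s.1 < m}
  have next : ∀ (M' : Set ℕ), M' ⊆ M → M'.Infinite →
      ∃ t : S, t.1.1 ∈ M' ∧ t.1.2 ⊆ M' := by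
    intro M' hM' hinf
    obtain ⟨n, M'', hn, h1, h2, h3, h4⟩ := step M' hM' hinf
    exact ⟨⟨⟨n, M''⟩, h1.trans hM', h2, h3, h4⟩, hn, h1⟩
  have base := next M subset_rfl hM
  let chain : ℕ → S := fun k => Nat.rec base.choose
    (fun _ prev => (next prev.1.2 prev.2.1 prev.2.2.1).choose) k
  have chain_succ : ∀ k, (chain (k+1)).1.1 ∈ (chain k).1.2 ∧
      (chain (k+1)).1.2 ⊆ (chain k).1.2 := by
    intro k
    exact (next (chain k).1.2 (chain k).2.1 (chain k).2.2.1).choose_spec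
  set nseq : ℕ → ℕ := fun k => (chain k).1.1 with hnseq
  set Mseq : ℕ → Set ℕ := fun k => (chain k).1.2 with hMseq
  have Mmono : ∀ k l, k ≤ l → Mseq l ⊆ Mseq k := by
    intro k l hkl
    induction l with
    | zero => simp_all
    | succ l ih =>
      rcases Nat.lt_or_ge k (l+1) with h | h
      · exact ((chain_succ l).2).trans (ih (Nat.lt_succ_iff.mp h))
      · have : k = l + 1 := le_antisymm hkl h
        subst this; exact subset_rfl
  have nmem : ∀ k, nseq (k+1) ∈ Mseq k := fun k => (chain_succ k).1
  have nlt : ∀ k l, k < l → nseq (k+1) < nseq (l+1) := by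
    intro k l hkl
    have h1 : nseq (l+1) ∈ Mseq l := nmem l
    have h2 : nseq (l+1) ∈ Mseq (k+1) := Mmono (k+1) l hkl h1
    exact (chain (k+1)).2.2.2.2 _ h2
  have ninj : Function.Injective (fun k => nseq (k+1)) := by
    intro a b hab
    simp only at hab
    by_contra hne
    rcases Nat.lt_or_ge a b with h | h
    · exact absurd hab (ne_of_lt (nlt _ _ h))
    · exact absurd hab.symm (ne_of_lt (nlt _ _ (by omega)))
  set N : Set ℕ := Set.range (fun k => nseq (k+1)) with hN
  have hNM : N ⊆ M := by
    rintro _ ⟨k, rfl⟩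
    exact (chain k).2.1 (nmem k)
  have hNinf : N.Infinite := Set.infinite_range_of_injective ninj
  -- N accepts F, contradiction
  refine hrej N hNM hNinf ?_
  intro L hLN hLinf
  have hLne : L.Nonempty := hLinf.nonempty
  set m0 := sInf L with hm0
  have hm0L : m0 ∈ L := Nat.sInf_mem hLne
  obtain ⟨i, hi⟩ := hLN hm0L
  simp only at hi
  -- L minus its min is inside Mseq (i+1)
  have hsub : L \ {m0} ⊆ Mseq (i+1) := by
    rintro x ⟨hxL, hxne⟩
    obtain ⟨j, hj⟩ := hLN hxL
    simp only at hj
    have hxgt : m0 < x := lt_of_le_of_ne (Nat.sInf_le hxL) (fun h => hxne (by simp [← h]))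
    have hij : i < j := by
      by_contra hle
      have : nseq (j+1) ≤ nseq (i+1) := by
        rcases Nat.lt_or_ge j i with h | h
        · exact le_of_lt (nlt _ _ h)
        · have : j = i := by omega
          subst this; exact le_rfl
      rw [hi, hj] at this
      omega
    have h1 : nseq (j+1) ∈ Mseq j := nmem j
    have h2 : nseq (j+1) ∈ Mseq (i+1) := Mmono (i+1) j hij h1
    rwa [hj] at h2
  have hLinf' : (L \ {m0}).Infinite := hLinf.diff (Set.finite_singleton m0)
  obtain ⟨E', hE'init, hE'F⟩ := (chain (i+1)).2.2.2.1 (L \ {m0}) hsub hLinf'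
  refine ⟨insert (nseq (i+1)) E', ⟨?_, ?_⟩, ?_⟩
  · intro y hy
    simp only [Finset.coe_insert, Set.mem_insert_iff] at hy
    rcases hy with rfl | hy
    · rw [hi]; exact hm0L
    · exact ((hE'init.1 hy).1 : _)
  · intro z hzL hzE y hyE
    simp only [Finset.mem_insert] at hzE hyE
    push_neg at hzE
    have hzne : z ≠ m0 := by
      intro h; exact hzE.1 (by rw [h, hi])
    have hz' : z ∈ L \ {m0} := ⟨hzL, by simpa using hzne⟩
    rcases hyE with rfl | hyE
    · rw [hi]; exact lt_of_le_of_ne (Nat.sInf_le hzL) (Ne.symm hzne)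
    · exact hE'init.2 z hz' hzE.2 y hyE
  · have heq : F ∪ insert (nseq (i+1)) E' = insert (nseq (i+1)) F ∪ E' := by
      ext a
      simp only [Finset.mem_union, Finset.mem_insert]
      tauto
    rw [heq]
    exact hE'F

lemma keyFamily (G : Finset (Finset ℕ)) (M : Set ℕ) (hM : M.Infinite)
    (hrej : ∀ F ∈ G, Rejects 𝓕 F M) :
    ∃ M', M' ⊆ M ∧ M'.Infinite ∧ (∀ F ∈ G, Rejects 𝓕 F M') ∧
      ∀ F ∈ G, ∀ n ∈ M', Rejects 𝓕 (insert n F) M' := by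
  classical
  induction G using Finset.induction_on generalizing M with
  | empty => exact ⟨M, subset_rfl, hM, by simp, by simp⟩
  | insert _ _ hF0 ih =>
    rename_i F0 G0
    obtain ⟨M1, hM1, hM1inf, h1, h2⟩ := ih M hM (fun F hF => hrej F (Finset.mem_insert_of_mem hF))
    have hrejF0 : Rejects 𝓕 F0 M1 := (hrej F0 (Finset.mem_insert_self _ _)).mono hM1
    obtain ⟨M2, hM2, hM2inf, h3⟩ := hrejF0.key hM1inf
    refine ⟨M2, hM2.trans hM1, hM2inf, ?_, ?_⟩
    · intro F hF
      rcases Finset.mem_insert.mp hF with rfl | hF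
      · exact hrejF0.mono hM2
      · exact (h1 F hF).mono hM2
    · intro F hF n hn
      rcases Finset.mem_insert.mp hF with rfl | hF
      · exact h3 n hn
      · exact (h2 F hF n (hM2 hn)).mono hM2

/-- Nash–Williams partition theorem for families of finite subsets of `ℕ`. -/
theorem nashWilliams (𝓕 : Finset ℕ → Prop) (M₀ : Set ℕ) (h : M₀.Infinite) :
    (∃ M, M ⊆ M₀ ∧ M.Infinite ∧ ∀ F : Finset ℕ, ↑F ⊆ M → ¬ 𝓕 F) ∨
    (∃ M, M ⊆ M₀ ∧ M.Infinite ∧ ∀ L ⊆ M, L.Infinite →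
      ∃ E : Finset ℕ, InitSeg E L ∧ 𝓕 E) := by
  classical
  obtain ⟨L0, hL0M, hL0inf, hacc | hrej⟩ := exists_accepts_or_rejects (𝓕 := 𝓕) ∅ M₀ h
  · right
    refine ⟨L0, hL0M, hL0inf, fun L hL hinf => ?_⟩
    obtain ⟨E, hE1, hE2⟩ := hacc L hL hinf
    exact ⟨E, hE1, by simpa using hE2⟩
  · left
    -- build an infinite set all of whose finite subsets are rejected
    let S := {s : Finset ℕ × Set ℕ // s.2 ⊆ M₀ ∧ s.2.Infinite ∧
      (∀ F ∈ s.1.powerset, Rejects 𝓕 F s.2) ∧ (∀ a ∈ s.1, ∀ m ∈ s.2, a < m)}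
    have next : ∀ s : S, ∃ (n : ℕ) (t : S), t.1.1 = insert n s.1.1 ∧ n ∈ s.1.2 ∧
        t.1.2 ⊆ s.1.2 := by
      rintro ⟨⟨N, Mc⟩, hMc0, hMcinf, hrejs, hords⟩
      obtain ⟨M', hM'sub, hM'inf, hr1, hr2⟩ := keyFamily N.powerset Mc hMcinf hrejs
      obtain ⟨n, hn⟩ := hM'inf.nonempty
      have hM''inf : (M' \ Iic n).Infinite := hM'inf.diff (finite_Iic n)
      refine ⟨n, ⟨⟨insert n N, M' \ Iic n⟩, ?_, hM''inf, ?_, ?_⟩, rfl, hM'sub hn, (diff_subset).trans hM'sub⟩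
      · exact (diff_subset.trans hM'sub).trans hMc0
      · intro F hF
        simp only [Finset.mem_powerset] at hF
        by_cases hnF : n ∈ F
        · have hF' : F.erase n ∈ N.powerset := by
            simp only [Finset.mem_powerset]
            intro a ha
            have := hF (Finset.mem_of_mem_erase ha)
            rcases Finset.mem_insert.mp this with rfl | h
            · exact absurd rfl (Finset.ne_of_mem_erase ha)
            · exact h
          have := hr2 _ hF' n hn
          rw [Finset.insert_erase hnF] at this
          exact this.mono diff_subset
        · have hF' : F ∈ N.powerset := by
            simp only [Finset.mem_powerset]
            intro a ha
            rcases Finset.mem_insert.mp (hF ha) with rfl | h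
            · exact absurd ha hnF
            · exact h
          exact (hr1 _ hF').mono diff_subset
      · intro a ha m hm
        rcases Finset.mem_insert.mp ha with rfl | ha
        · simpa using hm.2
        · exact hords a ha m (diff_subset.trans hM'sub hm)
    have base : S := ⟨⟨∅, L0⟩, hL0M, hL0inf, by simpa using hrej, by simp⟩
    let chain : ℕ → S := fun k => Nat.rec base (fun _ prev => ((next prev).choose_spec).choose) k
    have spec : ∀ k, (chain (k+1)).1.1 = insert ((next (chain k)).choose) (chain k).1.1 ∧
        (next (chain k)).choose ∈ (chain k).1.2 ∧ (chain (k+1)).1.2 ⊆ (chain k).1.2 :=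
      fun k => ((next (chain k)).choose_spec).choose_spec
    set nseq : ℕ → ℕ := fun k => (next (chain k)).choose with hnseq
    have Mmono : ∀ k l, k ≤ l → (chain l).1.2 ⊆ (chain k).1.2 := by
      intro k l hkl
      induction l with
      | zero => simp_all
      | succ l ih =>
        rcases Nat.lt_or_ge k (l+1) with hlt | hge
        · exact ((spec l).2.2).trans (ih (Nat.lt_succ_iff.mp hlt))
        · have : k = l + 1 := le_antisymm hkl hge
          subst this; exact subset_rfl
    have nmemN : ∀ i k, i < k → nseq i ∈ (chain k).1.1 := by
      intro i k hik
      induction k with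
      | zero => omega
      | succ k ih =>
        rw [(spec k).1]
        rcases Nat.lt_or_ge i k with h | h
        · exact Finset.mem_insert_of_mem (ih h)
        · have : i = k := by omega
          subst this; exact Finset.mem_insert_self _ _
    have nlt : ∀ k l, k < l → nseq k < nseq l := by
      intro k l hkl
      have h1 : nseq l ∈ (chain l).1.2 := (spec l).2.1
      have h2 : nseq l ∈ (chain (k+1)).1.2 := Mmono (k+1) l hkl h1
      exact (chain (k+1)).2.2.2.2 _ (nmemN k (k+1) (by omega)) _ h2
    have ninj : Function.Injective nseq := by
      intro a b hab
      by_contra hne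
      rcases Nat.lt_or_ge a b with h | h
      · exact absurd hab (ne_of_lt (nlt _ _ h))
      · exact absurd hab.symm (ne_of_lt (nlt _ _ (by omega)))
    refine ⟨Set.range nseq, ?_, Set.infinite_range_of_injective ninj, ?_⟩
    · rintro _ ⟨k, rfl⟩
      exact (chain k).2.1 ((spec k).2.1)
    · intro F hF
      -- find k with F ⊆ (chain k).N
      have hex : ∃ k, F ⊆ (chain k).1.1 := by
        classical
        induction F using Finset.induction_on with
        | empty => exact ⟨0, by simp⟩
        | insert _ _ hnotmem ih =>
          rename_i a F0
          obtain ⟨k, hk⟩ := ih (fun y hy => hF (by simp only [Finset.coe_insert, Set.mem_insert_iff]; exact Or.inr hy))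
          obtain ⟨i, hi⟩ := hF (show a ∈ (↑(insert a F0) : Set ℕ) by simp)
          have hNmono : ∀ p q, p ≤ q → (chain p).1.1 ⊆ (chain q).1.1 := by
            intro p q hpq
            induction q with
            | zero => simp_all
            | succ q ihq =>
              rcases Nat.lt_or_ge p (q+1) with hlt | hge
              · rw [(spec q).1]
                exact (ihq (Nat.lt_succ_iff.mp hlt)).trans (Finset.subset_insert _ _)
              · have : p = q + 1 := le_antisymm hpq hge
                subst this; exact subset_rfl
          refine ⟨max k (i+1), ?_⟩
          intro y hy
          rcases Finset.mem_insert.mp hy with rfl | hy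
          · have hmm := nmemN i (i+1) (by omega)
            rw [hi] at hmm
            exact hNmono (i+1) _ (le_max_right _ _) hmm
          · exact hNmono k _ (le_max_left _ _) (hk hy)
      obtain ⟨k, hk⟩ := hex
      intro hFF
      have hrejF : Rejects 𝓕 F (chain k).1.2 :=
        (chain k).2.2.2.1 F (Finset.mem_powerset.mpr hk)
      exact (hrejF.not_accepts (chain k).2.2.1) (accepts_of_mem hFF _)

lemma enum_spec {M : Set ℕ} (hM : M.Infinite) :
    ∃ e : ℕ → ℕ, StrictMono e ∧ (∀ k, e k ∈ M) ∧ ∀ m ∈ M, ∃ k, e k = m := by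
  classical
  have hM' : (setOf (· ∈ M)).Infinite := by exact hM
  exact ⟨Nat.nth (· ∈ M), Nat.nth_strictMono hM',
    fun k => Nat.nth_mem_of_infinite hM' k,
    fun m hm => ⟨Nat.count (· ∈ M) m, Nat.nth_count hm⟩⟩

variable {S : Type*}

/-- the alternating pattern along a list of indices can be realized -/
def AltOK (C : ℕ → Bool → Set S) (l : List ℕ) : Prop :=
  ∃ t : S, ∀ p, p < l.length → t ∈ C (l.getD p 0) (decide (p % 2 = 1))

/-- A list-version helper: sorted list of indices realizes prescribed patterns. -/
theorem pairDichotomy (C : ℕ → Bool → Set S) :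
    (∃ ψ : ℕ → ℕ, StrictMono ψ ∧ ∀ (n : ℕ) (ε : ℕ → Bool), ∃ t : S,
        ∀ i < n, t ∈ C (ψ i) (ε i)) ∨
    (∃ ψ : ℕ → ℕ, StrictMono ψ ∧ ∀ t : S,
        ¬ ((∃ᶠ k in atTop, t ∈ C (ψ k) false) ∧ (∃ᶠ k in atTop, t ∈ C (ψ k) true))) := by
  classical
  obtain ⟨M, _hM0, hMinf, hgood⟩ | ⟨M, _hM0, hMinf, hbad⟩ :=
    nashWilliams (fun F => ¬ AltOK C (F.sort (· ≤ ·))) univ infinite_univ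
  · -- independence branch
    left
    obtain ⟨e, he, heM, -⟩ := enum_spec hMinf
    refine ⟨fun k => e (2 * k + 1), he.comp (fun a b hab => by show 2*a+1 < 2*b+1; omega), ?_⟩
    intro n ε
    -- build the index list
    have key : ∀ i : ℕ, ∃ l : List ℕ, List.Pairwise (· < ·) l ∧ (∀ j ∈ l, j < 2 * i) ∧
        ∀ t : S, (∀ p, p < l.length → t ∈ C (e (l.getD p 0)) (decide (p % 2 = 1))) →
          ∀ k < i, t ∈ C (e (2 * k + 1)) (ε k) := by
      intro i
      induction i with
      | zero => exact ⟨[], by simp, by simp, by omega⟩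
      | succ i ih =>
        obtain ⟨l, hsort, hbound, hreal⟩ := ih
        by_cases hpar : (decide (l.length % 2 = 1)) = ε i
        · refine ⟨l ++ [2 * i + 1], ?_, ?_, ?_⟩
          · rw [List.pairwise_append]
            exact ⟨hsort, by simp, fun a ha b hb => by
              have := hbound a ha; simp at hb; omega⟩
          · intro j hj
            rcases List.mem_append.mp hj with h | h
            · have := hbound j h; omega
            · simp at h; omega
          · intro t ht k hk
            have hlen : (l ++ [2 * i + 1]).length = l.length + 1 := by simp
            rcases Nat.lt_or_ge k i with hki | hki
            · refine hreal t ?_ k hki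
              intro p hp
              have hplen : p < (l ++ [2 * i + 1]).length := by simp; omega
              have h1 := ht p hplen
              rwa [List.getD_eq_getElem _ _ hplen,
                List.getElem_append_left (by omega), ← List.getD_eq_getElem _ _ (by omega)] at h1
            · have hk' : k = i := by omega
              subst hk'
              have hlen2 : l.length < (l ++ [2 * k + 1]).length := by simp
              have h1 := ht l.length hlen2
              rw [List.getD_eq_getElem _ _ hlen2, List.getElem_append_right (by omega)] at h1
              simp only [Nat.sub_self] at h1
              rw [hpar] at h1
              simpa using h1
        · refine ⟨l ++ [2 * i, 2 * i + 1], ?_, ?_, ?_⟩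
          · rw [List.pairwise_append]
            refine ⟨hsort, by simp [List.pairwise_cons], fun a ha b hb => by
              have := hbound a ha; simp at hb; rcases hb with rfl | rfl <;> omega⟩
          · intro j hj
            rcases List.mem_append.mp hj with h | h
            · have := hbound j h; omega
            · simp at h; rcases h with rfl | rfl <;> omega
          · intro t ht k hk
            rcases Nat.lt_or_ge k i with hki | hki
            · refine hreal t ?_ k hki
              intro p hp
              have hplen : p < (l ++ [2 * i, 2 * i + 1]).length := by simp; omega
              have h1 := ht p hplen
              rwa [List.getD_eq_getElem _ _ hplen,
                List.getElem_append_left (by omega), ← List.getD_eq_getElem _ _ (by omega)] at h1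
            · have hk' : k = i := by omega
              subst hk'
              have hlen2 : l.length + 1 < (l ++ [2 * k, 2 * k + 1]).length := by
                simp
              have h1 := ht (l.length + 1) hlen2
              rw [List.getD_eq_getElem _ _ hlen2, List.getElem_append_right (by omega)] at h1
              have h2 : l.length + 1 - l.length = 1 := by omega
              simp only [h2] at h1
              have h3 : (decide ((l.length + 1) % 2 = 1)) = ε k := by
                cases hh : decide (l.length % 2 = 1) <;> rw [hh] at hpar
                · have hmod : l.length % 2 = 0 := by
                    have h2 : l.length % 2 < 2 := Nat.mod_lt l.length (by norm_num)
                    interval_cases h : l.length % 2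
                    · rfl
                    · simp [h] at hh
                  have : (l.length + 1) % 2 = 1 := by omega
                  simp only [this, decide_true]
                  cases hε : ε k
                  · simp [hε] at hpar
                  · rfl
                · have hmod : l.length % 2 = 1 := by simpa using hh
                  have : (l.length + 1) % 2 = 0 := by omega
                  simp only [this]
                  cases hε : ε k
                  · simp
                  · simp [hε] at hpar
              rw [h3] at h1
              simpa using h1
    obtain ⟨l, hsort, _hbound, hreal⟩ := key n
    -- the Finset of mapped indices
    have hmapsort : List.Pairwise (· < ·) (l.map e) := List.Pairwise.map e (fun a b h => he h) hsort
    have hnodup : (l.map e).Nodup := hmapsort.nodup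
    have hFsub : ↑(l.map e).toFinset ⊆ M := by
      intro y hy
      simp only [List.coe_toFinset, Set.mem_setOf_eq, List.mem_map] at hy
      obtain ⟨j, -, rfl⟩ := hy
      exact heM j
    have halt : AltOK C (((l.map e).toFinset).sort (· ≤ ·)) := by
      by_contra hno
      exact (hgood _ hFsub) hno
    rw [(List.toFinset_sort _ hnodup).mpr (hmapsort.imp (fun h => le_of_lt h))] at halt
    obtain ⟨t, ht⟩ := halt
    refine ⟨t, ?_⟩
    refine hreal t ?_
    intro p hp
    have h1 := ht p (by simpa using hp)
    rwa [List.getD_eq_getElem _ _ (by simpa using hp), List.getElem_map,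
      ← List.getD_eq_getElem _ _ hp] at h1
  · -- convergence branch
    right
    obtain ⟨e, he, heM, -⟩ := enum_spec hMinf
    refine ⟨e, he, ?_⟩
    rintro t ⟨hf, htr⟩
    -- build an alternating sequence of indices
    have step : ∀ (b : Bool) (N : ℕ), ∃ k, N ≤ k ∧ t ∈ C (e k) b := by
      intro b N
      cases b
      · obtain ⟨k, hk1, hk2⟩ := (frequently_atTop.mp hf) N
        exact ⟨k, hk1, hk2⟩
      · obtain ⟨k, hk1, hk2⟩ := (frequently_atTop.mp htr) N
        exact ⟨k, hk1, hk2⟩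
    have anext : ∀ (j : ℕ) (prev : ℕ), ∃ k, prev < k ∧ t ∈ C (e k) (decide (j % 2 = 1)) := by
      intro j prev
      obtain ⟨k, hk1, hk2⟩ := step (decide (j % 2 = 1)) (prev + 1)
      exact ⟨k, by omega, hk2⟩
    obtain ⟨k0, -, hk0⟩ := step (decide (0 % 2 = 1)) 0
    let a : ℕ → ℕ := fun j => Nat.rec k0 (fun j prev => (anext (j+1) prev).choose) j
    have ha0 : t ∈ C (e (a 0)) (decide (0 % 2 = 1)) := hk0
    have haS : ∀ j, a j < a (j+1) ∧ t ∈ C (e (a (j+1))) (decide ((j+1) % 2 = 1)) :=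
      fun j => (anext (j+1) (a j)).choose_spec
    have hamono : StrictMono a := strictMono_nat_of_lt_succ (fun j => (haS j).1)
    have haC : ∀ j, t ∈ C (e (a j)) (decide (j % 2 = 1)) := by
      intro j
      cases j with
      | zero => exact ha0
      | succ j => exact (haS j).2
    set L : Set ℕ := Set.range (fun j => e (a j)) with hL
    have hLM : L ⊆ M := by rintro _ ⟨j, rfl⟩; exact heM _
    have hLinf : L.Infinite :=
      Set.infinite_range_of_injective (he.comp hamono).injective
    obtain ⟨E, hEinit, hEbad⟩ := hbad L hLM hLinf
    -- E is the first card-many elements of L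
    apply hEbad
    have hea : StrictMono (fun j => e (a j)) := fun p q hpq => he (hamono hpq)
    have hmem : ∀ j < E.card, e (a j) ∈ E := by
      by_contra hcon
      push_neg at hcon
      obtain ⟨j0, hj0, hj0n⟩ := hcon
      have h1 : e (a j0) ∈ L := ⟨j0, rfl⟩
      have h2 := hEinit.2 _ h1 hj0n
      have h3 : E ⊆ Finset.image (fun j => e (a j)) (Finset.range j0) := by
        intro y hy
        obtain ⟨j, hj'⟩ := hEinit.1 hy
        have hlt : y < e (a j0) := h2 _ hy
        rw [← hj'] at hlt ⊢
        have hjlt : j < j0 := by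
          by_contra hge
          exact absurd hlt (not_lt.mpr (hea.monotone (by omega)))
        exact Finset.mem_image.mpr ⟨j, Finset.mem_range.mpr hjlt, rfl⟩
      have h4 := Finset.card_le_card h3
      have h5 : (Finset.image (fun j => e (a j)) (Finset.range j0)).card ≤ j0 :=
        le_trans Finset.card_image_le (by simp)
      omega
    have hsub2 : ∀ y ∈ E, ∃ j, j < E.card ∧ e (a j) = y := by
      intro y hy
      obtain ⟨j, hj'⟩ := hEinit.1 hy
      by_contra hcon
      push_neg at hcon
      have hjge : E.card ≤ j := by
        by_contra hlt
        exact absurd hj' (hcon j (by omega))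
      set G := Finset.image (fun j => e (a j)) (Finset.range E.card) with hG
      have hGE : G ⊆ E := by
        intro z hz
        obtain ⟨j', hj'2, rfl⟩ := Finset.mem_image.mp hz
        exact hmem j' (Finset.mem_range.mp hj'2)
      have hynG : y ∉ G := by
        intro hyG
        obtain ⟨j', hj'2, hj'3⟩ := Finset.mem_image.mp hyG
        rw [Finset.mem_range] at hj'2
        rw [← hj'] at hj'3
        have : j' = j := hea.injective hj'3
        omega
      have h6 : insert y G ⊆ E := Finset.insert_subset hy hGE
      have h7 := Finset.card_le_card h6
      rw [Finset.card_insert_of_notMem hynG] at h7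
      have h8 : G.card = E.card := by
        rw [hG, Finset.card_image_of_injective _ (fun p q hpq => hea.injective hpq)]
        simp
      omega
    -- E equals the toFinset of the mapped range list
    have hlist : List.Pairwise (· < ·) ((List.range E.card).map (fun j => e (a j))) :=
      List.Pairwise.map _ (fun p q h => hea h) List.pairwise_lt_range
    have hEeq : ((List.range E.card).map (fun j => e (a j))).toFinset = E := by
      apply Finset.ext
      intro y
      simp only [List.mem_toFinset, List.mem_map, List.mem_range]
      constructor
      · rintro ⟨j, hj, rfl⟩
        exact hmem j hj
      · intro hy
        obtain ⟨j, hj1, hj2⟩ := hsub2 y hy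
        exact ⟨j, hj1, hj2⟩
    rw [← hEeq, (List.toFinset_sort _ hlist.nodup).mpr (hlist.imp (fun h => le_of_lt h))]
    refine ⟨t, ?_⟩
    intro p hp
    simp only [List.length_map, List.length_range] at hp
    have h1 := haC p
    rw [List.getD_eq_getElem _ _ (by simp [hp]), List.getElem_map]
    simpa using h1

/-- Diagonalization over a sequence of subsequence-extraction steps. -/
lemma diag (Q : ℕ → (ℕ → ℕ) → Prop)
    (hstep : ∀ (j : ℕ) (ψ : ℕ → ℕ), StrictMono ψ →
      ∃ θ : ℕ → ℕ, StrictMono θ ∧ Q j (ψ ∘ θ)) :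
    ∃ δ : ℕ → ℕ, StrictMono δ ∧ ∀ j, ∃ ψ : ℕ → ℕ, StrictMono ψ ∧ Q j ψ ∧
      ∀ k, j < k → ∃ m, δ k = ψ m := by
  classical
  let next : {f : ℕ → ℕ // StrictMono f} → ℕ → {f : ℕ → ℕ // StrictMono f} :=
    fun ψ j => ⟨ψ.1 ∘ (hstep j ψ.1 ψ.2).choose, ψ.2.comp (hstep j ψ.1 ψ.2).choose_spec.1⟩
  let chain : ℕ → {f : ℕ → ℕ // StrictMono f} :=
    fun j => Nat.rec ⟨id, strictMono_id⟩ (fun j prev => next prev j) j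
  have hQ : ∀ j, Q j (chain (j+1)).1 :=
    fun j => (hstep j (chain j).1 (chain j).2).choose_spec.2
  have hcomp : ∀ j, ∃ θ : ℕ → ℕ, StrictMono θ ∧ (chain (j+1)).1 = (chain j).1 ∘ θ :=
    fun j => ⟨(hstep j (chain j).1 (chain j).2).choose,
      (hstep j (chain j).1 (chain j).2).choose_spec.1, rfl⟩
  have hfac : ∀ j k, j ≤ k → ∃ ρ : ℕ → ℕ, StrictMono ρ ∧ (chain k).1 = (chain j).1 ∘ ρ := by
    intro j k hjk
    induction k with
    | zero =>
      have : j = 0 := by omega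
      subst this; exact ⟨id, strictMono_id, rfl⟩
    | succ k ih =>
      rcases Nat.lt_or_ge j (k+1) with h | h
      · obtain ⟨ρ, hρ, hρeq⟩ := ih (by omega)
        obtain ⟨θ, hθ, hθeq⟩ := hcomp k
        exact ⟨ρ ∘ θ, hρ.comp hθ, by rw [hθeq, hρeq]; rfl⟩
      · have : j = k + 1 := by omega
        subst this; exact ⟨id, strictMono_id, rfl⟩
  refine ⟨fun k => (chain k).1 k, ?_, ?_⟩
  · apply strictMono_nat_of_lt_succ
    intro k
    obtain ⟨θ, hθ, hθeq⟩ := hcomp k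
    calc (chain k).1 k < (chain k).1 (k+1) := (chain k).2 (by omega)
    _ ≤ (chain k).1 (θ (k+1)) := (chain k).2.monotone hθ.le_apply
    _ = (chain (k+1)).1 (k+1) := by rw [hθeq]; rfl
  · intro j
    refine ⟨(chain (j+1)).1, (chain (j+1)).2, hQ j, ?_⟩
    intro k hk
    obtain ⟨ρ, hρ, hρeq⟩ := hfac (j+1) k (by omega)
    refine ⟨ρ k, ?_⟩
    show (chain k).1 k = (chain (j+1)).1 (ρ k)
    rw [hρeq]; rfl

lemma frequently_transfer {P : ℕ → Prop} {δ ψ : ℕ → ℕ} (hδ : StrictMono δ)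
    (hψ : StrictMono ψ) (j : ℕ) (hfac : ∀ k, j < k → ∃ m, δ k = ψ m)
    (h : ∃ᶠ k in atTop, P (δ k)) : ∃ᶠ m in atTop, P (ψ m) := by
  rw [Nat.frequently_atTop_iff_infinite] at h ⊢
  have hinf : {k | j < k ∧ P (δ k)}.Infinite := by
    have : {k | j < k ∧ P (δ k)} = {k | P (δ k)} \ {k | k ≤ j} := by
      ext k; simp [Set.mem_diff]; tauto
    rw [this]
    exact h.diff (Set.finite_le_nat j)
  haveI := hinf.to_subtype
  set m : ↥{k | j < k ∧ P (δ k)} → ℕ := fun k => (hfac k.1 k.2.1).choose with hm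
  have hmspec : ∀ k, δ k.1 = ψ (m k) := fun k => (hfac k.1 k.2.1).choose_spec
  apply Set.infinite_of_injective_forall_mem (f := m)
  · intro k1 k2 h12
    have : δ k1.1 = δ k2.1 := by rw [hmspec k1, hmspec k2, h12]
    exact Subtype.ext (hδ.injective this)
  · intro k
    have h2 := k.2.2
    rw [hmspec k] at h2
    exact h2

lemma l1_lower_of_indep {X : Type*} [NormedAddCommGroup X] [NormedSpace ℝ X]
    (y : ℕ → X) (r s : ℝ) (hrs : r < s)
    (h : ∀ (n : ℕ) (ε : ℕ → Bool), ∃ g : X →L[ℝ] ℝ, ‖g‖ ≤ 1 ∧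
      ∀ i < n, if ε i then s < g (y i) else g (y i) < r) :
    ∀ (a : ℕ → ℝ) (F : Finset ℕ), ((s - r)/2) * ∑ n ∈ F, |a n| ≤ ‖∑ n ∈ F, a n • y n‖ := by
  intro a F
  classical
  set n := (F.sup id) + 1 with hn
  have hFn : ∀ i ∈ F, i < n := fun i hi => by
    have h := Finset.le_sup (f := id) hi
    simp only [id] at h
    omega
  obtain ⟨gp, hgp1, hgp2⟩ := h n (fun i => decide (0 ≤ a i))
  obtain ⟨gm, hgm1, hgm2⟩ := h n (fun i => ! decide (0 ≤ a i))
  set v := ∑ i ∈ F, a i • y i with hv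
  have key : ∀ i ∈ F, (s - r) * |a i| ≤ a i * gp (y i) - a i * gm (y i) := by
    intro i hi
    have hgp3 := hgp2 i (hFn i hi)
    have hgm3 := hgm2 i (hFn i hi)
    by_cases hai : 0 ≤ a i
    · rw [if_pos (by simpa using hai)] at hgp3
      rw [if_neg (by simpa using hai)] at hgm3
      rw [abs_of_nonneg hai]
      nlinarith
    · push_neg at hai
      rw [if_neg (by simpa using (not_le.mpr hai))] at hgp3
      rw [if_pos (by simpa using (not_le.mpr hai))] at hgm3
      rw [abs_of_neg hai]
      nlinarith
  have hsum : (s - r) * ∑ i ∈ F, |a i| ≤ gp v - gm v := by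
    rw [hv, map_sum, map_sum, Finset.mul_sum, ← Finset.sum_sub_distrib]
    apply Finset.sum_le_sum
    intro i hi
    simpa [smul_eq_mul] using key i hi
  have h1 : gp v ≤ ‖v‖ := by
    calc gp v ≤ |gp v| := le_abs_self _
    _ ≤ ‖gp‖ * ‖v‖ := gp.le_opNorm v
    _ ≤ 1 * ‖v‖ := by have := norm_nonneg v; nlinarith
    _ = ‖v‖ := one_mul _
  have h2 : -gm v ≤ ‖v‖ := by
    calc -gm v ≤ |gm v| := neg_le_abs _
    _ ≤ ‖gm‖ * ‖v‖ := gm.le_opNorm v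
    _ ≤ 1 * ‖v‖ := by have := norm_nonneg v; nlinarith
    _ = ‖v‖ := one_mul _
  have hpos : (0:ℝ) ≤ ∑ i ∈ F, |a i| := Finset.sum_nonneg (fun i _ => abs_nonneg _)
  nlinarith

/-- Rosenthal's ℓ₁ theorem. -/
theorem rosenthal {X : Type*} [NormedAddCommGroup X] [NormedSpace ℝ X]
    (x : ℕ → X) (M₀ : ℝ) (hM : ∀ n, ‖x n‖ ≤ M₀) :
    (∃ ψ : ℕ → ℕ, StrictMono ψ ∧ ∀ f : X →L[ℝ] ℝ, ∃ L : ℝ,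
        Tendsto (fun k => f (x (ψ k))) atTop (𝓝 L)) ∨
    (∃ ψ : ℕ → ℕ, StrictMono ψ ∧ ∃ c : ℝ, 0 < c ∧ ∀ (a : ℕ → ℝ) (F : Finset ℕ),
        c * ∑ n ∈ F, |a n| ≤ ‖∑ n ∈ F, a n • x (ψ n)‖) := by
  classical
  by_cases hR : ∃ ψ : ℕ → ℕ, StrictMono ψ ∧ ∃ c : ℝ, 0 < c ∧ ∀ (a : ℕ → ℝ) (F : Finset ℕ),
      c * ∑ n ∈ F, |a n| ≤ ‖∑ n ∈ F, a n • x (ψ n)‖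
  · exact Or.inr hR
  left
  set e : ℕ → ℚ × ℚ := fun j => (Denumerable.eqv (ℚ × ℚ)).symm j with he
  have hesurj : Function.Surjective e := (Denumerable.eqv (ℚ × ℚ)).symm.surjective
  set Q : ℕ → (ℕ → ℕ) → Prop := fun j ψ =>
    ((e j).1 : ℝ) < ((e j).2 : ℝ) → ∀ g : X →L[ℝ] ℝ, ‖g‖ ≤ 1 →
      ¬ ((∃ᶠ k in atTop, g (x (ψ k)) < ((e j).1 : ℝ)) ∧
         (∃ᶠ k in atTop, ((e j).2 : ℝ) < g (x (ψ k)))) with hQdef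
  have hstep : ∀ (j : ℕ) (ψ : ℕ → ℕ), StrictMono ψ →
      ∃ θ : ℕ → ℕ, StrictMono θ ∧ Q j (ψ ∘ θ) := by
    intro j ψ hψ
    by_cases hrs : ((e j).1 : ℝ) < ((e j).2 : ℝ)
    swap
    · exact ⟨id, strictMono_id, fun h => absurd h hrs⟩
    set r : ℝ := ((e j).1 : ℝ)
    set s : ℝ := ((e j).2 : ℝ)
    obtain ⟨ψ', hψ', hind⟩ | ⟨ψ', hψ', hosc⟩ := pairDichotomy
      (fun n b => {g : X →L[ℝ] ℝ | ‖g‖ ≤ 1 ∧ if b then s < g (x (ψ n)) else g (x (ψ n)) < r})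
    · exfalso
      apply hR
      refine ⟨ψ ∘ ψ', hψ.comp hψ', (s - r)/2, by linarith, ?_⟩
      apply l1_lower_of_indep _ r s hrs
      intro n ε
      rcases Nat.eq_zero_or_pos n with rfl | hn
      · exact ⟨0, by simp, by omega⟩
      obtain ⟨g, hg⟩ := hind n ε
      exact ⟨g, (hg 0 hn).1, fun i hi => (hg i hi).2⟩
    · refine ⟨ψ', hψ', ?_⟩
      intro _ g hg hcon
      apply hosc g
      constructor
      · apply hcon.1.mono
        intro k hk
        exact ⟨hg, hk⟩
      · apply hcon.2.mono
        intro k hk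
        exact ⟨hg, hk⟩
  obtain ⟨δ, hδ, hδfac⟩ := diag Q hstep
  refine ⟨δ, hδ, ?_⟩
  have hM0 : 0 ≤ M₀ := le_trans (norm_nonneg _) (hM 0)
  -- first, functionals in the unit ball
  have hball : ∀ g : X →L[ℝ] ℝ, ‖g‖ ≤ 1 → ∃ L : ℝ,
      Tendsto (fun k => g (x (δ k))) atTop (𝓝 L) := by
    intro g hg
    set u : ℕ → ℝ := fun k => g (x (δ k)) with hu
    have hub : ∀ k, |u k| ≤ M₀ := by
      intro k
      calc |u k| ≤ ‖g‖ * ‖x (δ k)‖ := g.le_opNorm _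
      _ ≤ 1 * M₀ := by
          have h2 := hM (δ k)
          have h3 := norm_nonneg (x (δ k))
          nlinarith
      _ = M₀ := one_mul _
    have hbdd1 : IsBoundedUnder (· ≤ ·) atTop u := by
      refine isBoundedUnder_of ⟨M₀, fun k => ?_⟩
      have := abs_le.mp (hub k); linarith
    have hbdd2 : IsBoundedUnder (· ≥ ·) atTop u := by
      refine isBoundedUnder_of ⟨-M₀, fun k => ?_⟩
      have := abs_le.mp (hub k); simp only [ge_iff_le]; linarith
    have hle : liminf u atTop ≤ limsup u atTop := liminf_le_limsup hbdd1 hbdd2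
    rcases eq_or_lt_of_le hle with heq | hlt
    · exact ⟨limsup u atTop, tendsto_of_liminf_eq_limsup heq rfl hbdd1 hbdd2⟩
    · exfalso
      obtain ⟨r, hr1, hr2⟩ := exists_rat_btwn hlt
      obtain ⟨s, hs1, hs2⟩ := exists_rat_btwn hr2
      obtain ⟨j, hj⟩ := hesurj (r, s)
      obtain ⟨ψ, hψ, hQj, hfac⟩ := hδfac j
      have hrs : ((e j).1 : ℝ) < ((e j).2 : ℝ) := by rw [hj]; exact_mod_cast hs1
      apply hQj hrs g hg
      have hf1 : ∃ᶠ k in atTop, u k < ((e j).1 : ℝ) := by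
        rw [hj]
        exact frequently_lt_of_liminf_lt hbdd1.isCoboundedUnder_ge hr1
      have hf2 : ∃ᶠ k in atTop, ((e j).2 : ℝ) < u k := by
        rw [hj]
        exact frequently_lt_of_lt_limsup hbdd2.isCoboundedUnder_le hs2
      constructor
      · exact frequently_transfer (P := fun n => g (x n) < ((e j).1 : ℝ)) hδ hψ j hfac hf1
      · exact frequently_transfer (P := fun n => ((e j).2 : ℝ) < g (x n)) hδ hψ j hfac hf2
  intro f
  by_cases hf0 : f = 0
  · exact ⟨0, by simp [hf0]⟩
  · have hfn : ‖f‖ ≠ 0 := by simpa using hf0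
    obtain ⟨L, hL⟩ := hball (‖f‖⁻¹ • f) (by
      have h : ‖(‖f‖⁻¹ : ℝ) • f‖ = ‖(‖f‖⁻¹ : ℝ)‖ * ‖f‖ := norm_smul _ f
      rw [h, norm_inv, norm_norm, inv_mul_cancel₀ hfn])
    refine ⟨‖f‖ * L, ?_⟩
    have : ∀ k, f (x (δ k)) = ‖f‖ * ((‖f‖⁻¹ • f) (x (δ k))) := by
      intro k
      simp [ContinuousLinearMap.smul_apply, smul_eq_mul]
      rw [← mul_assoc, mul_inv_cancel₀ hfn, one_mul]
    simp_rw [this]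
    exact hL.const_mul _

/-- Every bounded-or-not sequence has a Cauchy subsequence or a uniformly separated one. -/
theorem cauchy_or_separated {Y : Type*} [NormedAddCommGroup Y] (y : ℕ → Y) :
    (∃ ψ : ℕ → ℕ, StrictMono ψ ∧ CauchySeq (fun k => y (ψ k))) ∨
    (∃ ψ : ℕ → ℕ, StrictMono ψ ∧ ∃ ε : ℝ, 0 < ε ∧
      ∀ i j, i ≠ j → ε ≤ ‖y (ψ i) - y (ψ j)‖) := by
  classical
  by_cases hR : ∃ ψ : ℕ → ℕ, StrictMono ψ ∧ ∃ ε : ℝ, 0 < ε ∧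
      ∀ i j, i ≠ j → ε ≤ ‖y (ψ i) - y (ψ j)‖
  · exact Or.inr hR
  left
  set Q : ℕ → (ℕ → ℕ) → Prop := fun j ψ =>
    ∀ k l, ‖y (ψ k) - y (ψ l)‖ < 1 / (j + 1) with hQdef
  have hstep : ∀ (j : ℕ) (ψ : ℕ → ℕ), StrictMono ψ →
      ∃ θ : ℕ → ℕ, StrictMono θ ∧ Q j (ψ ∘ θ) := by
    intro j ψ hψ
    set ε : ℝ := 1 / (j + 1) with hε
    have hεpos : 0 < ε := by positivity
    obtain ⟨M, -, hMinf, hgood⟩ | ⟨M, -, hMinf, hbad⟩ :=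
      nashWilliams (fun F => F.card = 2 ∧
        ∀ i ∈ F, ∀ i' ∈ F, i ≠ i' → ε ≤ ‖y (ψ i) - y (ψ i')‖) univ infinite_univ
    · -- all pairs are close
      obtain ⟨e, he, heM, -⟩ := enum_spec hMinf
      refine ⟨e, he, ?_⟩
      intro k l
      rcases eq_or_ne (e k) (e l) with heq | hne
      · show ‖y (ψ (e k)) - y (ψ (e l))‖ < ε
        rw [heq]
        simpa using hεpos
      · have h1 := hgood {e k, e l} (by
          intro z hz
          simp only [Finset.coe_insert, Finset.coe_singleton, Set.mem_insert_iff,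
            Set.mem_singleton_iff] at hz
          rcases hz with rfl | rfl
          · exact heM k
          · exact heM l)
        push_neg at h1
        have hcard : ({e k, e l} : Finset ℕ).card = 2 := by
          rw [Finset.card_insert_of_notMem (by simpa using hne), Finset.card_singleton]
        obtain ⟨u, hu, u', hu', huu', hdist⟩ := h1 hcard
        simp only [Finset.mem_insert, Finset.mem_singleton] at hu hu'
        show ‖y (ψ (e k)) - y (ψ (e l))‖ < ε
        rcases hu with rfl | rfl <;> rcases hu' with rfl | rfl
        · exact absurd rfl huu'
        · exact hdist
        · rwa [norm_sub_rev]
        · exact absurd rfl huu'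
    · -- all pairs are separated : contradiction with hR
      exfalso
      apply hR
      obtain ⟨e, he, heM, -⟩ := enum_spec hMinf
      refine ⟨ψ ∘ e, hψ.comp he, ε, hεpos, ?_⟩
      intro k l hkl
      -- consider the infinite set {e k, e l} ∪ tail
      wlog hlt : e k < e l generalizing k l
      · have h := this l k (Ne.symm hkl) (by
          rcases lt_or_gt_of_ne (fun h => hkl (he.injective h)) with h | h
          · omega
          · exact h)
        rwa [norm_sub_rev]
      set L : Set ℕ := {e k, e l} ∪ {m ∈ M | e l < m} with hLdef
      have hLM : L ⊆ M := by
        rintro z (hz | hz)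
        · rcases hz with rfl | hz
          · exact heM k
          · rw [Set.mem_singleton_iff] at hz; subst hz; exact heM l
        · exact hz.1
      have hLinf : L.Infinite := by
        apply Set.Infinite.mono (Set.subset_union_right)
        have heqd : {m ∈ M | e l < m} = M \ {m | m ≤ e l} := by
          ext z
          simp only [Set.mem_setOf_eq, Set.mem_diff, Set.mem_sep_iff]
          constructor <;> rintro ⟨h1, h2⟩ <;> exact ⟨h1, by omega⟩
        rw [heqd]
        exact hMinf.diff (Set.finite_le_nat _)
      obtain ⟨E, hEinit, hEcard, hEsep⟩ := hbad L hLM hLinf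
      -- E must be {e k, e l}
      have hekL : e k ∈ L := Or.inl (by simp)
      have helL : e l ∈ L := Or.inl (by simp)
      have hminL : ∀ z ∈ L, e k ≤ z := by
        rintro z (hz | hz)
        · rcases hz with rfl | hz
          · exact le_refl _
          · rw [Set.mem_singleton_iff] at hz; subst hz; omega
        · have := hz.2; omega
      have hekE : e k ∈ E := by
        by_contra hno
        have h2 := hEinit.2 (e k) hekL hno
        obtain ⟨a, b, hab, hEab⟩ := Finset.card_eq_two.mp hEcard
        have haE : a ∈ E := by rw [hEab]; simp
        have h3 := h2 a haE
        have h4 := hminL a (hEinit.1 haE)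
        omega
      have helE : e l ∈ E := by
        by_contra hno
        have h2 := hEinit.2 (e l) helL hno
        obtain ⟨a, b, hab, hEab⟩ := Finset.card_eq_two.mp hEcard
        have hw : ∃ w ∈ E, w ≠ e k := by
          rcases eq_or_ne a (e k) with rfl | ha
          · refine ⟨b, by rw [hEab]; simp, ?_⟩
            exact fun h => hab h.symm
          · exact ⟨a, by rw [hEab]; simp, ha⟩
        obtain ⟨w, hwE, hwk⟩ := hw
        have hwL : w ∈ L := hEinit.1 hwE
        have hwne_l : w ≠ e l := fun h => hno (h ▸ hwE)
        have hwgt : e l < w := by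
          rcases hwL with hz | hz
          · rcases hz with rfl | hz
            · exact absurd rfl hwk
            · rw [Set.mem_singleton_iff] at hz; exact absurd hz hwne_l
          · exact hz.2
        have h5 := h2 w hwE
        omega
      show ε ≤ ‖y (ψ (e k)) - y (ψ (e l))‖
      exact hEsep (e k) hekE (e l) helE (by omega)
  obtain ⟨δ, hδ, hδfac⟩ := diag Q hstep
  refine ⟨δ, hδ, ?_⟩
  rw [Metric.cauchySeq_iff]
  intro ε hε
  obtain ⟨j, hj⟩ := exists_nat_one_div_lt hε
  refine ⟨j + 1, ?_⟩
  intro m hm n hn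
  obtain ⟨ψ, hψ, hQj, hfac⟩ := hδfac j
  obtain ⟨pm, hpm⟩ := hfac m (by omega)
  obtain ⟨pn, hpn⟩ := hfac n (by omega)
  rw [dist_eq_norm, hpm, hpn]
  calc ‖y (ψ pm) - y (ψ pn)‖ < 1 / (j + 1) := hQj pm pn
  _ < ε := hj

/-- Finitely many norm-≤1 functionals almost norming a finite-dimensional span. -/
lemma norming {X : Type*} [NormedAddCommGroup X] [NormedSpace ℝ X]
    (V : Finset X) (δ : ℝ) (hδ : 0 < δ) :
    ∃ G : Finset (X →L[ℝ] ℝ), (∀ f ∈ G, ‖f‖ ≤ 1) ∧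
      ∀ v ∈ Submodule.span ℝ (V : Set X), ∃ f ∈ G, ‖v‖ ≤ (1 + δ) * f v := by
  classical
  set W := Submodule.span ℝ (V : Set X) with hW
  haveI : FiniteDimensional ℝ W := FiniteDimensional.span_of_finite ℝ V.finite_toSet
  haveI : ProperSpace W := FiniteDimensional.proper ℝ W
  set η : ℝ := δ / (1 + δ) with hη
  have hηpos : 0 < η := by positivity
  set K : Set W := sphere (0 : W) 1 with hK
  have hKc : IsCompact K := isCompact_sphere _ _
  have hcover : K ⊆ ⋃ w ∈ K, ball w η := by
    intro w hw
    exact Set.mem_biUnion hw (mem_ball_self hηpos)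
  obtain ⟨T, hTK, hTfin, hTcov⟩ :=
    hKc.elim_finite_subcover_image (fun w _ => isOpen_ball) hcover
  -- dual vectors
  set Fc : W → (X →L[ℝ] ℝ) := fun w =>
    if h : (w : X) ≠ 0 then (exists_dual_vector ℝ (w : X) (norm_ne_zero_iff.mpr h)).choose else 0 with hFc
  have hFc1 : ∀ w : W, (w : X) ≠ 0 → ‖Fc w‖ = 1 ∧ Fc w (w : X) = ‖(w : X)‖ := by
    intro w hw
    have h1 := (exists_dual_vector ℝ (w : X) (norm_ne_zero_iff.mpr hw)).choose_spec
    rw [hFc]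
    simp only [dif_pos hw]
    exact ⟨h1.1, by simpa using h1.2⟩
  refine ⟨insert 0 (hTfin.toFinset.image Fc), ?_, ?_⟩
  · intro f hf
    rcases Finset.mem_insert.mp hf with rfl | hf
    · simp
    · obtain ⟨w, hw, rfl⟩ := Finset.mem_image.mp hf
      rw [Set.Finite.mem_toFinset] at hw
      have hwK : w ∈ K := hTK hw
      have hw1 : ‖w‖ = 1 := by
        have h := hwK
        rw [hK, mem_sphere_iff_norm, sub_zero] at h
        exact h
      have hwne : (w : X) ≠ 0 := by
        intro h0
        rw [show ‖w‖ = ‖(w : X)‖ from rfl, h0] at hw1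
        simp at hw1
      exact le_of_eq (hFc1 w hwne).1
  · intro v hv
    rcases eq_or_ne v 0 with rfl | hvne
    · exact ⟨0, Finset.mem_insert_self _ _, by simp⟩
    · set u : W := ⟨v, hv⟩ with hu
      have hunorm : ‖u‖ = ‖v‖ := rfl
      have hvpos : 0 < ‖v‖ := norm_pos_iff.mpr hvne
      set u' : W := ‖v‖⁻¹ • u with hu'
      have hu'K : u' ∈ K := by
        simp only [hK, mem_sphere_iff_norm, sub_zero, hu', norm_smul, norm_inv, norm_norm]
        rw [hunorm]
        field_simp
      obtain ⟨w, hwT, hww⟩ := Set.mem_iUnion₂.mp (hTcov hu'K)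
      have hwK : w ∈ K := hTK hwT
      have hwnorm : ‖w‖ = 1 := by
        have h := hwK
        rw [hK, mem_sphere_iff_norm, sub_zero] at h
        exact h
      have hwne : (w : X) ≠ 0 := by
        intro h0
        rw [show ‖w‖ = ‖(w : X)‖ from rfl, h0] at hwnorm
        simp at hwnorm
      obtain ⟨hf1, hf2⟩ := hFc1 w hwne
      refine ⟨Fc w, Finset.mem_insert_of_mem
        (Finset.mem_image.mpr ⟨w, Set.Finite.mem_toFinset _ |>.mpr hwT, rfl⟩), ?_⟩
      -- estimate
      have hdist : ‖(u' : X) - (w : X)‖ < η := by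
        have := mem_ball.mp hww
        rw [dist_eq_norm] at this
        exact this
      have hfu' : 1 - η ≤ Fc w (u' : X) := by
        have h1 : Fc w (u' : X) = Fc w (w : X) + Fc w ((u' : X) - (w : X)) := by
          rw [map_sub]; ring
        have h2 : |Fc w ((u' : X) - (w : X))| ≤ ‖(u' : X) - (w : X)‖ := by
          calc |Fc w ((u' : X) - (w : X))| ≤ ‖Fc w‖ * ‖(u' : X) - (w : X)‖ :=
            (Fc w).le_opNorm _
          _ = ‖(u' : X) - (w : X)‖ := by rw [hf1, one_mul]
        have h3 := abs_le.mp h2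
        rw [h1, hf2]
        rw [show ‖(w : X)‖ = ‖w‖ from rfl, hwnorm]
        linarith
      have hcoe : (u' : X) = ‖v‖⁻¹ • v := rfl
      have hFcv : Fc w (u' : X) = ‖v‖⁻¹ * Fc w v := by
        rw [hcoe, map_smul, smul_eq_mul]
      have hkey : (1 - η) * ‖v‖ ≤ Fc w v := by
        have := hfu'
        rw [hFcv] at this
        have h4 : (1 - η) * ‖v‖ ≤ (‖v‖⁻¹ * Fc w v) * ‖v‖ := by
          apply mul_le_mul_of_nonneg_right this hvpos.le
        calc (1 - η) * ‖v‖ ≤ (‖v‖⁻¹ * Fc w v) * ‖v‖ := h4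
        _ = Fc w v := by field_simp
      have hfinal : (1 + δ) * (1 - η) = 1 := by
        rw [hη]; field_simp; ring
      calc ‖v‖ = (1 + δ) * ((1 - η) * ‖v‖) := by rw [← mul_assoc, hfinal, one_mul]
      _ ≤ (1 + δ) * Fc w v := by
          apply mul_le_mul_of_nonneg_left hkey (by linarith)

lemma weak_small {X : Type*} [NormedAddCommGroup X] [NormedSpace ℝ X]
    (d : ℕ → X) (hd : ∀ f : X →L[ℝ] ℝ, Tendsto (fun n => f (d n)) atTop (𝓝 0))
    (G : Finset (X →L[ℝ] ℝ)) (η : ℝ) (hη : 0 < η) :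
    ∃ N, ∀ n ≥ N, ∀ f ∈ G, |f (d n)| ≤ η := by
  have hev : ∀ᶠ n in atTop, ∀ f ∈ G, |f (d n)| ≤ η := by
    rw [eventually_all_finset]
    intro f hf
    obtain ⟨N, hN⟩ := Metric.tendsto_atTop.mp (hd f) η hη
    rw [eventually_atTop]
    refine ⟨N, fun n hn => ?_⟩
    have := hN n hn
    rw [Real.dist_eq, sub_zero] at this
    exact this.le
  exact eventually_atTop.mp hev

lemma prod_le_two (m n : ℕ) :
    (∏ i ∈ Finset.Ico m n, (1 + ((2:ℝ)⁻¹) ^ (i+2))) ≤ 2 := by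
  have h1 : (∏ i ∈ Finset.Ico m n, (1 + ((2:ℝ)⁻¹) ^ (i+2))) ≤
      ∏ i ∈ Finset.Ico m n, Real.exp (((2:ℝ)⁻¹) ^ (i+2)) := by
    apply Finset.prod_le_prod
    · intro i _; positivity
    · intro i _
      have := Real.add_one_le_exp (((2:ℝ)⁻¹) ^ (i+2))
      linarith
  have h2 : ∏ i ∈ Finset.Ico m n, Real.exp (((2:ℝ)⁻¹) ^ (i+2)) =
      Real.exp (∑ i ∈ Finset.Ico m n, ((2:ℝ)⁻¹) ^ (i+2)) := (Real.exp_sum _ _).symm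
  have h3 : (∑ i ∈ Finset.Ico m n, ((2:ℝ)⁻¹) ^ (i+2)) ≤ 1/2 := by
    have h4 : (∑ i ∈ Finset.Ico m n, ((2:ℝ)⁻¹) ^ (i+2)) ≤
        ∑ i ∈ Finset.range n, ((2:ℝ)⁻¹) ^ (i+2) := by
      apply Finset.sum_le_sum_of_subset_of_nonneg
      · intro i hi
        rw [Finset.mem_range]
        exact (Finset.mem_Ico.mp hi).2
      · intro i _ _; positivity
    have h5 : ∑ i ∈ Finset.range n, ((2:ℝ)⁻¹) ^ (i+2) =
        (1/4) * ∑ i ∈ Finset.range n, ((1:ℝ)/2) ^ i := by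
      rw [Finset.mul_sum]
      apply Finset.sum_congr rfl
      intro i _
      rw [pow_add]
      norm_num
      ring
    have h6 := sum_geometric_two_le n
    rw [h5] at h4
    nlinarith
  have h7 : Real.exp (∑ i ∈ Finset.Ico m n, ((2:ℝ)⁻¹) ^ (i+2)) ≤ Real.exp (1/2) :=
    Real.exp_le_exp.mpr h3
  have h8 : Real.exp (1/2) ≤ 2 := by
    have he : Real.exp (1/2) * Real.exp (1/2) = Real.exp 1 := by
      rw [← Real.exp_add]; norm_num
    have h9 := Real.exp_one_lt_d9
    have h10 := Real.exp_pos (1/2)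
    nlinarith
  linarith

lemma basic_of_step {X : Type*} [NormedAddCommGroup X] [NormedSpace ℝ X]
    (v : ℕ → X)
    (hstep : ∀ (a : ℕ → ℝ) (m : ℕ),
      ‖∑ i ∈ Finset.range m, a i • v i‖ ≤
        (1 + ((2:ℝ)⁻¹) ^ (m+2)) * ‖∑ i ∈ Finset.range (m+1), a i • v i‖) :
    ∀ (a : ℕ → ℝ) (m n : ℕ), m ≤ n →
      ‖∑ i ∈ Finset.range m, a i • v i‖ ≤ 2 * ‖∑ i ∈ Finset.range n, a i • v i‖ := by
  intro a m n hmn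
  have key : ∀ n, m ≤ n → ‖∑ i ∈ Finset.range m, a i • v i‖ ≤
      (∏ i ∈ Finset.Ico m n, (1 + ((2:ℝ)⁻¹) ^ (i+2))) * ‖∑ i ∈ Finset.range n, a i • v i‖ := by
    intro n hn
    induction n, hn using Nat.le_induction with
    | base => simp
    | succ n hn ih =>
      calc ‖∑ i ∈ Finset.range m, a i • v i‖
          ≤ (∏ i ∈ Finset.Ico m n, (1 + ((2:ℝ)⁻¹) ^ (i+2))) * ‖∑ i ∈ Finset.range n, a i • v i‖ := ih
      _ ≤ (∏ i ∈ Finset.Ico m n, (1 + ((2:ℝ)⁻¹) ^ (i+2))) *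
            ((1 + ((2:ℝ)⁻¹) ^ (n+2)) * ‖∑ i ∈ Finset.range (n+1), a i • v i‖) := by
          apply mul_le_mul_of_nonneg_left (hstep a n)
          apply Finset.prod_nonneg
          intro i _; positivity
      _ = (∏ i ∈ Finset.Ico m (n+1), (1 + ((2:ℝ)⁻¹) ^ (i+2))) *
            ‖∑ i ∈ Finset.range (n+1), a i • v i‖ := by
          rw [Finset.prod_Ico_succ_top hn]
          ring
  calc ‖∑ i ∈ Finset.range m, a i • v i‖
      ≤ (∏ i ∈ Finset.Ico m n, (1 + ((2:ℝ)⁻¹) ^ (i+2))) * ‖∑ i ∈ Finset.range n, a i • v i‖ :=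
        key n hmn
  _ ≤ 2 * ‖∑ i ∈ Finset.range n, a i • v i‖ :=
        mul_le_mul_of_nonneg_right (prod_le_two m n) (norm_nonneg _)

/-- Simultaneous Bessaga–Pełczyński selection for two weakly null seminormalized sequences. -/
lemma bp2 {X Y : Type*} [NormedAddCommGroup X] [NormedSpace ℝ X]
    [NormedAddCommGroup Y] [NormedSpace ℝ Y]
    (d : ℕ → X) (g : ℕ → Y)
    (hd : ∀ f : X →L[ℝ] ℝ, Tendsto (fun n => f (d n)) atTop (𝓝 0))
    (hg : ∀ f : Y →L[ℝ] ℝ, Tendsto (fun n => f (g n)) atTop (𝓝 0))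
    (cd : ℝ) (hcd : 0 < cd) (hbd : ∀ n, cd ≤ ‖d n‖)
    (ce : ℝ) (hce : 0 < ce) (hbe : ∀ n, ce ≤ ‖g n‖) :
    ∃ θ : ℕ → ℕ, StrictMono θ ∧
      (∀ (a : ℕ → ℝ) (m n : ℕ), m ≤ n →
        ‖∑ i ∈ Finset.range m, a i • d (θ i)‖ ≤ 2 * ‖∑ i ∈ Finset.range n, a i • d (θ i)‖) ∧
      (∀ (a : ℕ → ℝ) (m n : ℕ), m ≤ n →
        ‖∑ i ∈ Finset.range m, a i • g (θ i)‖ ≤ 2 * ‖∑ i ∈ Finset.range n, a i • g (θ i)‖) := by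
  classical
  set γ : ℕ → ℝ := fun m => ((2:ℝ)⁻¹) ^ (m+2) with hγdef
  have hγpos : ∀ m, 0 < γ m := fun m => by positivity
  have hγle : ∀ m, γ m ≤ 1/4 := by
    intro m
    show ((2:ℝ)⁻¹) ^ (m+2) ≤ 1/4
    refine le_trans (pow_le_pow_of_le_one (by norm_num) (by norm_num) (by omega : 2 ≤ m + 2)) ?_
    norm_num
  have hGX := fun (l : List ℕ) =>
    norming ((l.map d).toFinset) (γ l.length / 8) (by have := hγpos l.length; linarith)
  have hGY := fun (l : List ℕ) =>
    norming ((l.map g).toFinset) (γ l.length / 8) (by have := hγpos l.length; linarith)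
  choose GX hGX1 hGX2 using hGX
  choose GY hGY1 hGY2 using hGY
  have hfold : ∀ (l : List ℕ) (j : ℕ), j ∈ l → j ≤ l.foldr max 0 := by
    intro l
    induction l with
    | nil => simp
    | cons b l ih =>
      intro j hj
      rcases List.mem_cons.mp hj with rfl | hj
      · exact le_max_left _ _
      · exact le_trans (ih j hj) (le_max_right _ _)
  have hnext : ∀ l : List ℕ, ∃ N, (∀ j ∈ l, j < N) ∧
      (∀ f ∈ GX l, |f (d N)| ≤ cd * (γ l.length / 8)) ∧
      (∀ f ∈ GY l, |f (g N)| ≤ ce * (γ l.length / 8)) := by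
    intro l
    obtain ⟨N1, hN1⟩ := weak_small d hd (GX l) (cd * (γ l.length / 8))
      (by have := hγpos l.length; positivity)
    obtain ⟨N2, hN2⟩ := weak_small g hg (GY l) (ce * (γ l.length / 8))
      (by have := hγpos l.length; positivity)
    refine ⟨max (max N1 N2) ((l.foldr max 0) + 1), ?_, ?_, ?_⟩
    · intro j hj
      have := hfold l j hj
      have h2 := le_max_right (max N1 N2) ((l.foldr max 0) + 1)
      omega
    · exact hN1 _ (le_trans (le_max_left N1 N2) (le_max_left _ _))
    · exact hN2 _ (le_trans (le_max_right N1 N2) (le_max_left _ _))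
  choose nxt hnxt1 hnxt2 hnxt3 using hnext
  set chain : ℕ → List ℕ := fun m => Nat.rec [] (fun _ l => l ++ [nxt l]) m with hchain
  set θ : ℕ → ℕ := fun m => nxt (chain m) with hθ
  have hchainsucc : ∀ m, chain (m+1) = chain m ++ [θ m] := fun m => rfl
  have hlen : ∀ m, (chain m).length = m := by
    intro m
    induction m with
    | zero => rfl
    | succ m ih => rw [hchainsucc, List.length_append, ih]; rfl
  have hchain_eq : ∀ m, chain m = (List.range m).map θ := by
    intro m
    induction m with
    | zero => rfl
    | succ m ih => rw [hchainsucc, ih, List.range_succ, List.map_append]; rfl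
  have hθmono : StrictMono θ := by
    apply strictMono_nat_of_lt_succ
    intro m
    have h1 : θ m ∈ chain (m+1) := by
      rw [hchainsucc]; simp
    exact hnxt1 (chain (m+1)) (θ m) h1
  refine ⟨θ, hθmono, ?_, ?_⟩
  · apply basic_of_step
    intro a m
    set Sm := ∑ i ∈ Finset.range m, a i • d (θ i) with hSm
    set Sm1 := ∑ i ∈ Finset.range (m+1), a i • d (θ i) with hSm1
    have hsm : Sm1 = Sm + a m • d (θ m) := Finset.sum_range_succ _ _
    have hmem : Sm ∈ Submodule.span ℝ (((chain m).map d).toFinset : Set X) := by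
      apply Submodule.sum_mem
      intro i hi
      apply Submodule.smul_mem
      apply Submodule.subset_span
      simp only [List.coe_toFinset, Set.mem_setOf_eq, List.mem_map]
      refine ⟨θ i, ?_, rfl⟩
      rw [hchain_eq]
      exact List.mem_map.mpr ⟨i, List.mem_range.mpr (Finset.mem_range.mp hi), rfl⟩
    obtain ⟨f, hfG, hfv⟩ := hGX2 (chain m) Sm hmem
    have hf1 : ‖f‖ ≤ 1 := hGX1 (chain m) f hfG
    rw [hlen m] at hfv
    have hsmall : |f (d (θ m))| ≤ cd * (γ m / 8) := by
      have h := hnxt2 (chain m) f hfG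
      rw [hlen m] at h
      exact h
    have habs : |a m| * cd ≤ ‖Sm‖ + ‖Sm1‖ := by
      have h5 : a m • d (θ m) = Sm1 - Sm := by rw [hsm]; abel
      have h6 : |a m| * ‖d (θ m)‖ = ‖Sm1 - Sm‖ := by
        rw [← h5, norm_smul, Real.norm_eq_abs]
      have h7 : ‖Sm1 - Sm‖ ≤ ‖Sm1‖ + ‖Sm‖ := norm_sub_le _ _
      have h8 := hbd (θ m)
      nlinarith [abs_nonneg (a m)]
    have hfSm1 : f Sm1 ≤ ‖Sm1‖ := by
      calc f Sm1 ≤ |f Sm1| := le_abs_self _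
      _ ≤ ‖f‖ * ‖Sm1‖ := f.le_opNorm _
      _ ≤ 1 * ‖Sm1‖ := mul_le_mul_of_nonneg_right hf1 (norm_nonneg _)
      _ = ‖Sm1‖ := one_mul _
    have hfs : f Sm = f Sm1 - a m * f (d (θ m)) := by
      rw [hsm]
      simp only [map_add, map_smul, smul_eq_mul]
      ring
    have hγ1 : 0 < γ m := hγpos m
    have hγ2 : γ m ≤ 1/4 := hγle m
    have hup : |a m * f (d (θ m))| ≤ (‖Sm‖ + ‖Sm1‖) * (γ m / 8) := by
      rw [abs_mul]
      calc |a m| * |f (d (θ m))| ≤ |a m| * (cd * (γ m / 8)) :=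
        mul_le_mul_of_nonneg_left hsmall (abs_nonneg _)
      _ = (|a m| * cd) * (γ m / 8) := by ring
      _ ≤ (‖Sm‖ + ‖Sm1‖) * (γ m / 8) := by
          apply mul_le_mul_of_nonneg_right habs
          have := hγ1; linarith
    have hA0 : (0:ℝ) ≤ ‖Sm‖ := norm_nonneg _
    have hB0 : (0:ℝ) ≤ ‖Sm1‖ := norm_nonneg _
    have ht : f Sm ≤ ‖Sm1‖ + (‖Sm‖ + ‖Sm1‖) * (γ m / 8) := by
      rw [hfs]
      have := abs_le.mp hup
      linarith
    have e1 : ‖Sm‖ ≤ (1 + γ m / 8) * (‖Sm1‖ + (‖Sm‖ + ‖Sm1‖) * (γ m / 8)) := by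
      calc ‖Sm‖ ≤ (1 + γ m / 8) * f Sm := hfv
      _ ≤ (1 + γ m / 8) * (‖Sm1‖ + (‖Sm‖ + ‖Sm1‖) * (γ m / 8)) := by
          apply mul_le_mul_of_nonneg_left ht
          linarith
    show ‖Sm‖ ≤ (1 + γ m) * ‖Sm1‖
    nlinarith [sq_nonneg (γ m), mul_nonneg hA0 hγ1.le, mul_nonneg hB0 hγ1.le]
  · apply basic_of_step
    intro a m
    set Sm := ∑ i ∈ Finset.range m, a i • g (θ i) with hSm
    set Sm1 := ∑ i ∈ Finset.range (m+1), a i • g (θ i) with hSm1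
    have hsm : Sm1 = Sm + a m • g (θ m) := Finset.sum_range_succ _ _
    have hmem : Sm ∈ Submodule.span ℝ (((chain m).map g).toFinset : Set Y) := by
      apply Submodule.sum_mem
      intro i hi
      apply Submodule.smul_mem
      apply Submodule.subset_span
      simp only [List.coe_toFinset, Set.mem_setOf_eq, List.mem_map]
      refine ⟨θ i, ?_, rfl⟩
      rw [hchain_eq]
      exact List.mem_map.mpr ⟨i, List.mem_range.mpr (Finset.mem_range.mp hi), rfl⟩
    obtain ⟨f, hfG, hfv⟩ := hGY2 (chain m) Sm hmem
    have hf1 : ‖f‖ ≤ 1 := hGY1 (chain m) f hfG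
    rw [hlen m] at hfv
    have hsmall : |f (g (θ m))| ≤ ce * (γ m / 8) := by
      have h := hnxt3 (chain m) f hfG
      rw [hlen m] at h
      exact h
    have habs : |a m| * ce ≤ ‖Sm‖ + ‖Sm1‖ := by
      have h5 : a m • g (θ m) = Sm1 - Sm := by rw [hsm]; abel
      have h6 : |a m| * ‖g (θ m)‖ = ‖Sm1 - Sm‖ := by
        rw [← h5, norm_smul, Real.norm_eq_abs]
      have h7 : ‖Sm1 - Sm‖ ≤ ‖Sm1‖ + ‖Sm‖ := norm_sub_le _ _
      have h8 := hbe (θ m)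
      nlinarith [abs_nonneg (a m)]
    have hfSm1 : f Sm1 ≤ ‖Sm1‖ := by
      calc f Sm1 ≤ |f Sm1| := le_abs_self _
      _ ≤ ‖f‖ * ‖Sm1‖ := f.le_opNorm _
      _ ≤ 1 * ‖Sm1‖ := mul_le_mul_of_nonneg_right hf1 (norm_nonneg _)
      _ = ‖Sm1‖ := one_mul _
    have hfs : f Sm = f Sm1 - a m * f (g (θ m)) := by
      rw [hsm]
      simp only [map_add, map_smul, smul_eq_mul]
      ring
    have hγ1 : 0 < γ m := hγpos m
    have hγ2 : γ m ≤ 1/4 := hγle m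
    have hup : |a m * f (g (θ m))| ≤ (‖Sm‖ + ‖Sm1‖) * (γ m / 8) := by
      rw [abs_mul]
      calc |a m| * |f (g (θ m))| ≤ |a m| * (ce * (γ m / 8)) :=
        mul_le_mul_of_nonneg_left hsmall (abs_nonneg _)
      _ = (|a m| * ce) * (γ m / 8) := by ring
      _ ≤ (‖Sm‖ + ‖Sm1‖) * (γ m / 8) := by
          apply mul_le_mul_of_nonneg_right habs
          have := hγ1; linarith
    have hA0 : (0:ℝ) ≤ ‖Sm‖ := norm_nonneg _
    have hB0 : (0:ℝ) ≤ ‖Sm1‖ := norm_nonneg _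
    have ht : f Sm ≤ ‖Sm1‖ + (‖Sm‖ + ‖Sm1‖) * (γ m / 8) := by
      rw [hfs]
      have := abs_le.mp hup
      linarith
    have e1 : ‖Sm‖ ≤ (1 + γ m / 8) * (‖Sm1‖ + (‖Sm‖ + ‖Sm1‖) * (γ m / 8)) := by
      calc ‖Sm‖ ≤ (1 + γ m / 8) * f Sm := hfv
      _ ≤ (1 + γ m / 8) * (‖Sm1‖ + (‖Sm‖ + ‖Sm1‖) * (γ m / 8)) := by
          apply mul_le_mul_of_nonneg_left ht
          linarith
    show ‖Sm‖ ≤ (1 + γ m) * ‖Sm1‖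
    nlinarith [sq_nonneg (γ m), mul_nonneg hA0 hγ1.le, mul_nonneg hB0 hγ1.le]

/-- Trivial upper `ℓ₁` estimate. -/
lemma upper_bound {X : Type*} [NormedAddCommGroup X] [NormedSpace ℝ X]
    (v : ℕ → X) (C : ℝ) (hC : ∀ n, ‖v n‖ ≤ C) (a : ℕ → ℝ) (F : Finset ℕ) :
    ‖∑ k ∈ F, a k • v k‖ ≤ C * ∑ k ∈ F, |a k| := by
  calc ‖∑ k ∈ F, a k • v k‖ ≤ ∑ k ∈ F, ‖a k • v k‖ := norm_sum_le _ _
  _ ≤ ∑ k ∈ F, C * |a k| := by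
      apply Finset.sum_le_sum
      intro k _
      rw [norm_smul, Real.norm_eq_abs]
      calc |a k| * ‖v k‖ ≤ |a k| * C := mul_le_mul_of_nonneg_left (hC k) (abs_nonneg _)
      _ = C * |a k| := mul_comm _ _
  _ = C * ∑ k ∈ F, |a k| := by rw [Finset.mul_sum]

/-- ℓ₁ lower estimates pass to subsequences. -/
lemma l1_lower_subseq {X : Type*} [NormedAddCommGroup X] [NormedSpace ℝ X]
    (v : ℕ → X) (c : ℝ)
    (h : ∀ (a : ℕ → ℝ) (F : Finset ℕ), c * ∑ n ∈ F, |a n| ≤ ‖∑ n ∈ F, a n • v n‖)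
    (θ : ℕ → ℕ) (hθ : Function.Injective θ) :
    ∀ (a : ℕ → ℝ) (F : Finset ℕ), c * ∑ k ∈ F, |a k| ≤ ‖∑ k ∈ F, a k • v (θ k)‖ := by
  classical
  intro a F
  set b : ℕ → ℝ := fun j => if h : ∃ k ∈ F, θ k = j then a h.choose else 0 with hbdef
  have hb : ∀ k ∈ F, b (θ k) = a k := by
    intro k hk
    have hex : ∃ k' ∈ F, θ k' = θ k := ⟨k, hk, rfl⟩
    rw [hbdef]
    simp only [dif_pos hex]
    have := hex.choose_spec.2
    rw [hθ this]
  have hsum1 : ∑ j ∈ F.image θ, b j • v j = ∑ k ∈ F, a k • v (θ k) := by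
    rw [Finset.sum_image (fun x _ y _ h => hθ h)]
    apply Finset.sum_congr rfl
    intro k hk
    rw [hb k hk]
  have hsum2 : ∑ j ∈ F.image θ, |b j| = ∑ k ∈ F, |a k| := by
    rw [Finset.sum_image (fun x _ y _ h => hθ h)]
    apply Finset.sum_congr rfl
    intro k hk
    rw [hb k hk]
  calc c * ∑ k ∈ F, |a k| = c * ∑ j ∈ F.image θ, |b j| := by rw [hsum2]
  _ ≤ ‖∑ j ∈ F.image θ, b j • v j‖ := h b _
  _ = ‖∑ k ∈ F, a k • v (θ k)‖ := by rw [hsum1]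

/-- ℓ₁ lower estimates pass to difference sequences along disjoint pairs. -/
lemma l1_lower_pairs {X : Type*} [NormedAddCommGroup X] [NormedSpace ℝ X]
    (v : ℕ → X) (c : ℝ) (hc : 0 ≤ c)
    (h : ∀ (a : ℕ → ℝ) (F : Finset ℕ), c * ∑ n ∈ F, |a n| ≤ ‖∑ n ∈ F, a n • v n‖)
    (P Q : ℕ → ℕ) (hP : Function.Injective P) (hQ : Function.Injective Q)
    (hPQ : ∀ k l, Q k ≠ P l) :
    ∀ (a : ℕ → ℝ) (F : Finset ℕ),
      c * ∑ k ∈ F, |a k| ≤ ‖∑ k ∈ F, a k • (v (Q k) - v (P k))‖ := by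
  classical
  intro a F
  set b : ℕ → ℝ := fun j =>
    (if h : ∃ k ∈ F, Q k = j then a h.choose else 0) +
    (if h : ∃ k ∈ F, P k = j then -(a h.choose) else 0) with hbdef
  have hbQ : ∀ k ∈ F, b (Q k) = a k := by
    intro k hk
    have hex : ∃ k' ∈ F, Q k' = Q k := ⟨k, hk, rfl⟩
    have hnex : ¬ ∃ k' ∈ F, P k' = Q k := by
      rintro ⟨k', _, hk'⟩
      exact hPQ k k' hk'.symm
    rw [hbdef]
    simp only [dif_pos hex, dif_neg hnex, add_zero]
    rw [hQ hex.choose_spec.2]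
  have hbP : ∀ k ∈ F, b (P k) = -(a k) := by
    intro k hk
    have hex : ∃ k' ∈ F, P k' = P k := ⟨k, hk, rfl⟩
    have hnex : ¬ ∃ k' ∈ F, Q k' = P k := by
      rintro ⟨k', _, hk'⟩
      exact hPQ k' k hk'
    rw [hbdef]
    simp only [dif_pos hex, dif_neg hnex, zero_add]
    rw [hP hex.choose_spec.2]
  have hdisj : Disjoint (F.image Q) (F.image P) := by
    rw [Finset.disjoint_left]
    intro j hjQ hjP
    obtain ⟨k, _, rfl⟩ := Finset.mem_image.mp hjQ
    obtain ⟨l, _, hl⟩ := Finset.mem_image.mp hjP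
    exact hPQ k l hl.symm
  set G := F.image Q ∪ F.image P with hG
  have hsum1 : ∑ j ∈ G, b j • v j = ∑ k ∈ F, a k • (v (Q k) - v (P k)) := by
    rw [hG, Finset.sum_union hdisj,
      Finset.sum_image (fun x _ y _ h => hQ h), Finset.sum_image (fun x _ y _ h => hP h)]
    rw [← Finset.sum_add_distrib]
    apply Finset.sum_congr rfl
    intro k hk
    rw [hbQ k hk, hbP k hk, smul_sub]
    module
  have hsum2 : ∑ j ∈ G, |b j| = 2 * ∑ k ∈ F, |a k| := by
    rw [hG, Finset.sum_union hdisj,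
      Finset.sum_image (fun x _ y _ h => hQ h), Finset.sum_image (fun x _ y _ h => hP h)]
    rw [← Finset.sum_add_distrib, Finset.mul_sum]
    apply Finset.sum_congr rfl
    intro k hk
    rw [hbQ k hk, hbP k hk, abs_neg]
    ring
  have h1 := h b G
  rw [hsum1, hsum2] at h1
  have h2 : (0:ℝ) ≤ ∑ k ∈ F, |a k| := Finset.sum_nonneg (fun k _ => abs_nonneg _)
  nlinarith

/-- A sequence with two-sided ℓ₁ estimates is basic. -/
lemma isBasic_of_l1 {X : Type*} [NormedAddCommGroup X] [NormedSpace ℝ X]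
    (v : ℕ → X) (hv0 : ∀ n, v n ≠ 0) (hl1 : EquivL1Basis v) : IsBasicSeq v := by
  obtain ⟨c, C, hc, h⟩ := hl1
  refine ⟨hv0, max 1 (C/c), le_max_left _ _, ?_⟩
  intro a m n hmn
  have h1 := (h a (Finset.range m)).2
  have h2 := (h a (Finset.range n)).1
  have h3 : ∑ i ∈ Finset.range m, |a i| ≤ ∑ i ∈ Finset.range n, |a i| :=
    Finset.sum_le_sum_of_subset_of_nonneg (Finset.range_subset_range.mpr hmn)
      (fun i _ _ => abs_nonneg _)
  have h4 : C * ∑ i ∈ Finset.range n, |a i| ≤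
      (C/c) * ‖∑ i ∈ Finset.range n, a i • v i‖ := by
    rw [div_mul_eq_mul_div, le_div_iff₀ hc]
    calc (C * ∑ i ∈ Finset.range n, |a i|) * c
        = C * (c * ∑ i ∈ Finset.range n, |a i|) := by ring
    _ ≤ C * ‖∑ i ∈ Finset.range n, a i • v i‖ := by
        apply mul_le_mul_of_nonneg_left h2 ?_
        -- C ≥ 0 : from h on a singleton
        have h5 := (h (fun _ => 1) {0}).2
        simp at h5
        have h6 := norm_nonneg (v 0)
        linarith
    _ = (C * ‖∑ i ∈ Finset.range n, a i • v i‖) := rfl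
  have hC0 : 0 ≤ C := by
    have h5 := (h (fun _ => 1) {0}).2
    simp at h5
    have h6 := norm_nonneg (v 0)
    have h7 := norm_pos_iff.mpr (hv0 0)
    linarith
  calc ‖∑ i ∈ Finset.range m, a i • v i‖ ≤ C * ∑ i ∈ Finset.range m, |a i| := h1
  _ ≤ C * ∑ i ∈ Finset.range n, |a i| := mul_le_mul_of_nonneg_left h3 hC0
  _ ≤ (C/c) * ‖∑ i ∈ Finset.range n, a i • v i‖ := h4
  _ ≤ max 1 (C/c) * ‖∑ i ∈ Finset.range n, a i • v i‖ :=
      mul_le_mul_of_nonneg_right (le_max_right _ _) (norm_nonneg _)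

/-- A sequence whose lacunary differences are seminormalized has no convergent subsequence. -/
lemma not_conv {Y : Type*} [NormedAddCommGroup Y] (w : ℕ → Y)
    (hsem : Seminormalized (fun k => w (4*k+2) - w (4*k))) :
    ¬ ∃ y : Y, Tendsto w atTop (𝓝 y) := by
  rintro ⟨y, hy⟩
  obtain ⟨c, C, hc, hbound⟩ := hsem
  have t1 : Tendsto (fun k => w (4*k)) atTop (𝓝 y) :=
    hy.comp ((strictMono_mul_left_of_pos (by norm_num) : StrictMono (fun k => 4*k)).tendsto_atTop)
  have t2 : Tendsto (fun k => w (4*k+2)) atTop (𝓝 y) := by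
    apply hy.comp
    apply StrictMono.tendsto_atTop
    intro p q hpq
    show 4*p+2 < 4*q+2
    omega
  have t3 : Tendsto (fun k => w (4*k+2) - w (4*k)) atTop (𝓝 0) := by
    have := t2.sub t1
    rwa [sub_self] at this
  have t4 : Tendsto (fun k => ‖w (4*k+2) - w (4*k)‖) atTop (𝓝 0) := by
    have := t3.norm
    rwa [norm_zero] at this
  have t5 : ∀ᶠ k in atTop, ‖w (4*k+2) - w (4*k)‖ < c :=
    t4.eventually_lt_const hc
  obtain ⟨k, hk⟩ := t5.exists
  exact absurd ((hbound k).1) (not_le.mpr hk)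

/-- weakly Cauchy implies weakly null differences -/
lemma wn_diff {X : Type*} [NormedAddCommGroup X] [NormedSpace ℝ X]
    (u : ℕ → X) (hu : ∀ f : X →L[ℝ] ℝ, ∃ L : ℝ, Tendsto (fun n => f (u n)) atTop (𝓝 L))
    (P Q : ℕ → ℕ) (hP : Tendsto P atTop atTop) (hQ : Tendsto Q atTop atTop) :
    ∀ f : X →L[ℝ] ℝ, Tendsto (fun k => f (u (Q k) - u (P k))) atTop (𝓝 0) := by
  intro f
  obtain ⟨L, hL⟩ := hu f
  have h1 : Tendsto (fun k => f (u (Q k))) atTop (𝓝 L) := hL.comp hQ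
  have h2 : Tendsto (fun k => f (u (P k))) atTop (𝓝 L) := hL.comp hP
  have h3 := h1.sub h2
  rw [sub_self] at h3
  apply h3.congr
  intro k
  rw [map_sub]

/-- building the final subsequence with padding. -/
lemma build_phi (Pf Qf : ℕ → ℕ) (h1 : ∀ k, Pf k + 2 ≤ Qf k) (h2 : ∀ k, Qf k + 2 ≤ Pf (k+1)) :
    ∃ φ : ℕ → ℕ, StrictMono φ ∧ (∀ k, φ (4*k) = Pf k) ∧ (∀ k, φ (4*k+2) = Qf k) := by
  set φ : ℕ → ℕ := fun n =>
    if n % 4 = 0 then Pf (n/4) else if n % 4 = 1 then Pf (n/4) + 1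
    else if n % 4 = 2 then Qf (n/4) else Qf (n/4) + 1 with hφ
  have e0 : ∀ k, φ (4*k) = Pf k := by
    intro k
    have ha : (4*k) % 4 = 0 := by omega
    have hb : (4*k) / 4 = k := by omega
    simp only [hφ, ha, hb]
    norm_num
  have e2 : ∀ k, φ (4*k+2) = Qf k := by
    intro k
    have ha : (4*k+2) % 4 = 2 := by omega
    have hb : (4*k+2) / 4 = k := by omega
    simp only [hφ, ha, hb]
    norm_num
  refine ⟨φ, ?_, e0, e2⟩
  apply strictMono_nat_of_lt_succ
  intro n
  have hr : n % 4 = 0 ∨ n % 4 = 1 ∨ n % 4 = 2 ∨ n % 4 = 3 := by omega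
  rcases hr with h | h | h | h
  · have ha : (n+1) % 4 = 1 := by omega
    have hb : (n+1) / 4 = n / 4 := by omega
    simp only [hφ, h, ha, hb]
    norm_num
  · have ha : (n+1) % 4 = 2 := by omega
    have hb : (n+1) / 4 = n / 4 := by omega
    simp only [hφ, h, ha, hb]
    norm_num
    have := h1 (n/4)
    omega
  · have ha : (n+1) % 4 = 3 := by omega
    have hb : (n+1) / 4 = n / 4 := by omega
    simp only [hφ, h, ha, hb]
    norm_num
  · have ha : (n+1) % 4 = 0 := by omega
    have hb : (n+1) / 4 = n / 4 + 1 := by omega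
    simp only [hφ, h, ha, hb]
    norm_num
    have := h2 (n/4)
    omega

/-- Finishing move: package the selected pairs into the final subsequence. -/
lemma finishB {X Y : Type*}
    [NormedAddCommGroup X] [NormedSpace ℝ X]
    [NormedAddCommGroup Y] [NormedSpace ℝ Y]
    (T : X →L[ℝ] Y) (x : ℕ → X) (σ : ℕ → ℕ) (hσ : StrictMono σ)
    (θ : ℕ → ℕ) (hθ : StrictMono θ)
    (h1 : Seminormalized (fun k => x (σ (4*θ k+2)) - x (σ (4*θ k))))
    (h2 : IsBasicSeq (fun k => x (σ (4*θ k+2)) - x (σ (4*θ k))))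
    (h3 : Seminormalized (fun k => T (x (σ (4*θ k+2))) - T (x (σ (4*θ k)))))
    (h4 : IsBasicSeq (fun k => T (x (σ (4*θ k+2))) - T (x (σ (4*θ k)))))
    (h5 : WeaklyNull (fun k => x (σ (4*θ k+2)) - x (σ (4*θ k))) ∨
      EquivL1Basis (fun k => x (σ (4*θ k+2)) - x (σ (4*θ k))))
    (h6 : WeaklyNull (fun k => T (x (σ (4*θ k+2))) - T (x (σ (4*θ k)))) ∨
      EquivL1Basis (fun k => T (x (σ (4*θ k+2))) - T (x (σ (4*θ k))))) :
    ∃ φ : ℕ → ℕ, StrictMono φ ∧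
      Xor' (∃ y : Y, Tendsto (fun k => T (x (φ k))) atTop (𝓝 y))
        (Seminormalized (fun k => x (φ (4 * k + 2)) - x (φ (4 * k))) ∧
         IsBasicSeq (fun k => x (φ (4 * k + 2)) - x (φ (4 * k))) ∧
         Seminormalized (fun k => T (x (φ (4 * k + 2))) - T (x (φ (4 * k)))) ∧
         IsBasicSeq (fun k => T (x (φ (4 * k + 2))) - T (x (φ (4 * k)))) ∧
         (WeaklyNull (fun k => x (φ (4 * k + 2)) - x (φ (4 * k))) ∨
          EquivL1Basis (fun k => x (φ (4 * k + 2)) - x (φ (4 * k)))) ∧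
         (WeaklyNull (fun k => T (x (φ (4 * k + 2))) - T (x (φ (4 * k)))) ∨
          EquivL1Basis (fun k => T (x (φ (4 * k + 2))) - T (x (φ (4 * k)))))) := by
  have hgap : ∀ a b : ℕ, a + 2 ≤ b → σ a + 2 ≤ σ b := by
    intro a b hab
    have g1 : σ a < σ (a+1) := hσ (by omega)
    have g2 : σ (a+1) < σ b := hσ (by omega)
    omega
  obtain ⟨φ, hφ, he0, he2⟩ := build_phi (fun k => σ (4*θ k)) (fun k => σ (4*θ k+2))
    (fun k => hgap _ _ (by omega))
    (fun k => hgap _ _ (by have := hθ (show k < k+1 by omega); omega))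
  have hrwx : (fun k => x (φ (4 * k + 2)) - x (φ (4 * k))) =
      (fun k => x (σ (4*θ k+2)) - x (σ (4*θ k))) := by
    funext k
    rw [he2 k, he0 k]
  have hrwT : (fun k => T (x (φ (4 * k + 2))) - T (x (φ (4 * k)))) =
      (fun k => T (x (σ (4*θ k+2))) - T (x (σ (4*θ k)))) := by
    funext k
    rw [he2 k, he0 k]
  refine ⟨φ, hφ, Or.inr ⟨⟨?_, ?_, ?_, ?_, ?_, ?_⟩, ?_⟩⟩
  · rw [hrwx]; exact h1
  · rw [hrwx]; exact h2
  · rw [hrwT]; exact h3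
  · rw [hrwT]; exact h4
  · rw [hrwx]; exact h5
  · rw [hrwT]; exact h6
  · apply not_conv (fun k => T (x (φ k)))
    show Seminormalized (fun k => T (x (φ (4*k+2))) - T (x (φ (4*k))))
    rw [hrwT]
    exact h3

/-- Case B of the main theorem. -/
lemma caseB {X Y : Type*}
    [NormedAddCommGroup X] [NormedSpace ℝ X]
    [NormedAddCommGroup Y] [NormedSpace ℝ Y]
    (T : X →L[ℝ] Y) (x : ℕ → X) (M : ℝ) (hM : ∀ n, ‖x n‖ ≤ M)
    (σ : ℕ → ℕ) (hσ : StrictMono σ) (ε : ℝ) (hε : 0 < ε)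
    (hsep : ∀ i j, i ≠ j → ε ≤ ‖T (x (σ i)) - T (x (σ j))‖)
    (hTprop : (∀ g : Y →L[ℝ] ℝ, ∃ L : ℝ, Tendsto (fun n => g (T (x (σ n)))) atTop (𝓝 L)) ∨
      (∃ c : ℝ, 0 < c ∧ ∀ (a : ℕ → ℝ) (F : Finset ℕ),
        c * ∑ n ∈ F, |a n| ≤ ‖∑ n ∈ F, a n • T (x (σ n))‖))
    (hxprop : (∀ f : X →L[ℝ] ℝ, ∃ L : ℝ, Tendsto (fun n => f (x (σ n))) atTop (𝓝 L)) ∨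
      (∃ c : ℝ, 0 < c ∧ ∀ (a : ℕ → ℝ) (F : Finset ℕ),
        c * ∑ n ∈ F, |a n| ≤ ‖∑ n ∈ F, a n • x (σ n)‖)) :
    ∃ φ : ℕ → ℕ, StrictMono φ ∧
      Xor' (∃ y : Y, Tendsto (fun k => T (x (φ k))) atTop (𝓝 y))
        (Seminormalized (fun k => x (φ (4 * k + 2)) - x (φ (4 * k))) ∧
         IsBasicSeq (fun k => x (φ (4 * k + 2)) - x (φ (4 * k))) ∧
         Seminormalized (fun k => T (x (φ (4 * k + 2))) - T (x (φ (4 * k)))) ∧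
         IsBasicSeq (fun k => T (x (φ (4 * k + 2))) - T (x (φ (4 * k)))) ∧
         (WeaklyNull (fun k => x (φ (4 * k + 2)) - x (φ (4 * k))) ∨
          EquivL1Basis (fun k => x (φ (4 * k + 2)) - x (φ (4 * k)))) ∧
         (WeaklyNull (fun k => T (x (φ (4 * k + 2))) - T (x (φ (4 * k)))) ∨
          EquivL1Basis (fun k => T (x (φ (4 * k + 2))) - T (x (φ (4 * k)))))) := by
  classical
  have hM0 : 0 ≤ M := le_trans (norm_nonneg _) (hM 0)
  set d : ℕ → X := fun k => x (σ (4*k+2)) - x (σ (4*k)) with hd_def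
  set Td : ℕ → Y := fun k => T (x (σ (4*k+2))) - T (x (σ (4*k))) with hTd_def
  have hTd_eq : ∀ k, Td k = T (d k) := by
    intro k
    rw [hTd_def, hd_def]
    simp [map_sub]
  have hTd_low : ∀ k, ε ≤ ‖Td k‖ := fun k => hsep (4*k+2) (4*k) (by omega)
  have hT0 : 0 < ‖T‖ := by
    by_contra hc
    push_neg at hc
    have h0 : ‖T‖ = 0 := le_antisymm hc (norm_nonneg T)
    have h1 := hTd_low 0
    rw [hTd_eq 0] at h1
    have h2 : ‖T (d 0)‖ ≤ ‖T‖ * ‖d 0‖ := T.le_opNorm _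
    rw [h0, zero_mul] at h2
    linarith
  have hd_low : ∀ k, ε / ‖T‖ ≤ ‖d k‖ := by
    intro k
    rw [div_le_iff₀ hT0]
    have h1 := hTd_low k
    rw [hTd_eq k] at h1
    have h2 : ‖T (d k)‖ ≤ ‖T‖ * ‖d k‖ := T.le_opNorm _
    calc ε ≤ ‖T (d k)‖ := h1
    _ ≤ ‖T‖ * ‖d k‖ := h2
    _ = ‖d k‖ * ‖T‖ := mul_comm _ _
  have hd_up : ∀ k, ‖d k‖ ≤ 2*M := by
    intro k
    rw [hd_def]
    calc ‖x (σ (4*k+2)) - x (σ (4*k))‖ ≤ ‖x (σ (4*k+2))‖ + ‖x (σ (4*k))‖ := norm_sub_le _ _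
    _ ≤ 2*M := by have := hM (σ (4*k+2)); have := hM (σ (4*k)); linarith
  have hTd_up : ∀ k, ‖Td k‖ ≤ ‖T‖*(2*M) := by
    intro k
    rw [hTd_eq k]
    calc ‖T (d k)‖ ≤ ‖T‖ * ‖d k‖ := T.le_opNorm _
    _ ≤ ‖T‖*(2*M) := mul_le_mul_of_nonneg_left (hd_up k) (norm_nonneg T)
  have hsem_d : Seminormalized d := ⟨ε/‖T‖, 2*M, div_pos hε hT0,
    fun k => ⟨hd_low k, hd_up k⟩⟩
  have hsem_Td : Seminormalized Td := ⟨ε, ‖T‖*(2*M), hε, fun k => ⟨hTd_low k, hTd_up k⟩⟩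
  have hd_ne : ∀ k, d k ≠ 0 := by
    intro k h0
    have := hd_low k
    rw [h0, norm_zero] at this
    have := div_pos hε hT0
    linarith
  have hTd_ne : ∀ k, Td k ≠ 0 := by
    intro k h0
    have := hTd_low k
    rw [h0, norm_zero] at this
    linarith
  -- T of a combination of d's
  have hTsum : ∀ (a : ℕ → ℝ) (F : Finset ℕ),
      T (∑ k ∈ F, a k • d k) = ∑ k ∈ F, a k • Td k := by
    intro a F
    rw [map_sum]
    apply Finset.sum_congr rfl
    intro k _
    rw [map_smul, hTd_eq k]
  rcases hTprop with hTWC | ⟨cT, hcT, hTL1⟩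
  · -- T-side weakly Cauchy: Td weakly null
    have hTdWN : WeaklyNull Td := by
      intro f
      exact wn_diff (fun n => T (x (σ n))) hTWC (fun k => 4*k) (fun k => 4*k+2)
        ((strictMono_mul_left_of_pos (by norm_num : (0:ℕ) < 4)).tendsto_atTop)
        ((show StrictMono (fun k : ℕ => 4*k+2) from fun p q h => by simp only; omega).tendsto_atTop) f
    rcases hxprop with hxWC | ⟨cx, hcx, hxL1⟩
    · -- both weakly null
      have hdWN : WeaklyNull d := by
        intro f
        exact wn_diff (fun n => x (σ n)) hxWC (fun k => 4*k) (fun k => 4*k+2)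
          ((strictMono_mul_left_of_pos (by norm_num : (0:ℕ) < 4)).tendsto_atTop)
          ((show StrictMono (fun k : ℕ => 4*k+2) from fun p q h => by simp only; omega).tendsto_atTop) f
      obtain ⟨θ, hθ, hgrd, hgrT⟩ := bp2 d Td hdWN hTdWN (ε/‖T‖) (div_pos hε hT0) hd_low
        ε hε hTd_low
      apply finishB T x σ hσ θ hθ
      · exact ⟨ε/‖T‖, 2*M, div_pos hε hT0, fun k => ⟨hd_low (θ k), hd_up (θ k)⟩⟩
      · exact ⟨fun k => hd_ne (θ k), 2, one_le_two, hgrd⟩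
      · exact ⟨ε, ‖T‖*(2*M), hε, fun k => ⟨hTd_low (θ k), hTd_up (θ k)⟩⟩
      · exact ⟨fun k => hTd_ne (θ k), 2, one_le_two, hgrT⟩
      · exact Or.inl (fun f => (hdWN f).comp hθ.tendsto_atTop)
      · exact Or.inl (fun f => (hTdWN f).comp hθ.tendsto_atTop)
    · -- x-side ℓ₁, T-side weakly null
      have hd_l1low : ∀ (a : ℕ → ℝ) (F : Finset ℕ),
          cx * ∑ k ∈ F, |a k| ≤ ‖∑ k ∈ F, a k • d k‖ := by
        intro a F
        exact l1_lower_pairs (fun n => x (σ n)) cx hcx.le hxL1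
          (fun k => 4*k) (fun k => 4*k+2)
          (fun p q h => by simp only at h; omega) (fun p q h => by simp only at h; omega) (fun p q => by omega) a F
      obtain ⟨θ, hθ, hgrT, -⟩ := bp2 Td Td hTdWN hTdWN ε hε hTd_low ε hε hTd_low
      have hdθ_l1 : EquivL1Basis (fun k => d (θ k)) := by
        refine ⟨cx, 2*M, hcx, fun a F => ⟨?_, ?_⟩⟩
        · exact l1_lower_subseq d cx hd_l1low θ hθ.injective a F
        · exact upper_bound (fun k => d (θ k)) (2*M) (fun k => hd_up (θ k)) a F
      apply finishB T x σ hσ θ hθ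
      · exact ⟨ε/‖T‖, 2*M, div_pos hε hT0, fun k => ⟨hd_low (θ k), hd_up (θ k)⟩⟩
      · exact isBasic_of_l1 _ (fun k => hd_ne (θ k)) hdθ_l1
      · exact ⟨ε, ‖T‖*(2*M), hε, fun k => ⟨hTd_low (θ k), hTd_up (θ k)⟩⟩
      · exact ⟨fun k => hTd_ne (θ k), 2, one_le_two, hgrT⟩
      · exact Or.inr hdθ_l1
      · exact Or.inl (fun f => (hTdWN f).comp hθ.tendsto_atTop)
  · -- T-side ℓ₁
    have hTd_l1low : ∀ (a : ℕ → ℝ) (F : Finset ℕ),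
        cT * ∑ k ∈ F, |a k| ≤ ‖∑ k ∈ F, a k • Td k‖ := by
      intro a F
      exact l1_lower_pairs (fun n => T (x (σ n))) cT hcT.le hTL1
        (fun k => 4*k) (fun k => 4*k+2)
        (fun p q h => by simp only at h; omega) (fun p q h => by simp only at h; omega) (fun p q => by omega) a F
    have hd_l1low : ∀ (a : ℕ → ℝ) (F : Finset ℕ),
        (cT/‖T‖) * ∑ k ∈ F, |a k| ≤ ‖∑ k ∈ F, a k • d k‖ := by
      intro a F
      rw [div_mul_eq_mul_div, div_le_iff₀ hT0]
      have h1 := hTd_l1low a F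
      have h2 : ‖∑ k ∈ F, a k • Td k‖ ≤ ‖T‖ * ‖∑ k ∈ F, a k • d k‖ := by
        rw [← hTsum a F]
        exact T.le_opNorm _
      calc cT * ∑ k ∈ F, |a k| ≤ ‖∑ k ∈ F, a k • Td k‖ := h1
      _ ≤ ‖T‖ * ‖∑ k ∈ F, a k • d k‖ := h2
      _ = ‖∑ k ∈ F, a k • d k‖ * ‖T‖ := mul_comm _ _
    have hd_l1 : EquivL1Basis d :=
      ⟨cT/‖T‖, 2*M, div_pos hcT hT0, fun a F =>
        ⟨hd_l1low a F, upper_bound d (2*M) hd_up a F⟩⟩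
    have hTd_l1 : EquivL1Basis Td :=
      ⟨cT, ‖T‖*(2*M), hcT, fun a F =>
        ⟨hTd_l1low a F, upper_bound Td (‖T‖*(2*M)) hTd_up a F⟩⟩
    apply finishB T x σ hσ id strictMono_id
    · exact ⟨ε/‖T‖, 2*M, div_pos hε hT0, fun k => ⟨hd_low k, hd_up k⟩⟩
    · exact isBasic_of_l1 _ (fun k => hd_ne k) hd_l1
    · exact ⟨ε, ‖T‖*(2*M), hε, fun k => ⟨hTd_low k, hTd_up k⟩⟩
    · exact isBasic_of_l1 _ (fun k => hTd_ne k) hTd_l1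
    · exact Or.inr hd_l1
    · exact Or.inr hTd_l1

end Stmt7Aux

/-- If `(x n)` is a bounded sequence in a Banach space `X` and
`T : X → Y` is a bounded operator, then there is a subsequence `x ∘ φ` such that
exactly one of the following holds: (a) `(T (x (φ k)))` is norm-convergent; (b) the
difference sequences `(x (φ (4k+2)) - x (φ (4k)))` and `(T (x (φ (4k+2))) - T (x (φ (4k))))`
are both seminormalized basic, and each is weakly null or equivalent to the `ℓ₁` basis. -/
theorem stmt7 {X Y : Type*}
    [NormedAddCommGroup X] [NormedSpace ℝ X] [CompleteSpace X]
    [NormedAddCommGroup Y] [NormedSpace ℝ Y] [CompleteSpace Y]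
    (T : X →L[ℝ] Y) (x : ℕ → X) (hb : ∃ M : ℝ, ∀ n, ‖x n‖ ≤ M) :
    ∃ φ : ℕ → ℕ, StrictMono φ ∧
      Xor' (∃ y : Y, Tendsto (fun k => T (x (φ k))) atTop (𝓝 y))
        (Seminormalized (fun k => x (φ (4 * k + 2)) - x (φ (4 * k))) ∧
         IsBasicSeq (fun k => x (φ (4 * k + 2)) - x (φ (4 * k))) ∧
         Seminormalized (fun k => T (x (φ (4 * k + 2))) - T (x (φ (4 * k)))) ∧
         IsBasicSeq (fun k => T (x (φ (4 * k + 2))) - T (x (φ (4 * k)))) ∧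
         (WeaklyNull (fun k => x (φ (4 * k + 2)) - x (φ (4 * k))) ∨
          EquivL1Basis (fun k => x (φ (4 * k + 2)) - x (φ (4 * k)))) ∧
         (WeaklyNull (fun k => T (x (φ (4 * k + 2))) - T (x (φ (4 * k)))) ∨
          EquivL1Basis (fun k => T (x (φ (4 * k + 2))) - T (x (φ (4 * k)))))) := by
  classical
  obtain ⟨M, hM⟩ := hb
  obtain ⟨ψ, hψ, hcau⟩ | ⟨ψ0, hψ0, ε, hε, hsep⟩ :=
    Stmt7Aux.cauchy_or_separated (fun n => T (x n))
  · obtain ⟨y, hy⟩ := cauchySeq_tendsto_of_complete hcau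
    refine ⟨ψ, hψ, Or.inl ⟨⟨y, hy⟩, ?_⟩⟩
    rintro ⟨-, -, hsemT, -, -, -⟩
    exact Stmt7Aux.not_conv (fun k => T (x (ψ k))) hsemT ⟨y, hy⟩
  · have hTbound : ∀ n, ‖T (x (ψ0 n))‖ ≤ ‖T‖ * M :=
      fun n => le_trans (T.le_opNorm _) (mul_le_mul_of_nonneg_left (hM _) (norm_nonneg T))
    have hstage1 : ∃ ψ1 : ℕ → ℕ, StrictMono ψ1 ∧
        ((∀ g : Y →L[ℝ] ℝ, ∃ L : ℝ,
            Tendsto (fun n => g (T (x (ψ0 (ψ1 n))))) atTop (𝓝 L)) ∨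
         (∃ c : ℝ, 0 < c ∧ ∀ (a : ℕ → ℝ) (F : Finset ℕ),
            c * ∑ n ∈ F, |a n| ≤ ‖∑ n ∈ F, a n • T (x (ψ0 (ψ1 n)))‖)) := by
      rcases Stmt7Aux.rosenthal (fun n => T (x (ψ0 n))) (‖T‖*M) hTbound with
        ⟨ψ1, h1, h2⟩ | ⟨ψ1, h1, c, hc, h2⟩
      · exact ⟨ψ1, h1, Or.inl h2⟩
      · exact ⟨ψ1, h1, Or.inr ⟨c, hc, h2⟩⟩
    obtain ⟨ψ1, hψ1, hTp⟩ := hstage1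
    have hstage2 : ∃ ψ2 : ℕ → ℕ, StrictMono ψ2 ∧
        ((∀ f : X →L[ℝ] ℝ, ∃ L : ℝ,
            Tendsto (fun n => f (x (ψ0 (ψ1 (ψ2 n))))) atTop (𝓝 L)) ∨
         (∃ c : ℝ, 0 < c ∧ ∀ (a : ℕ → ℝ) (F : Finset ℕ),
            c * ∑ n ∈ F, |a n| ≤ ‖∑ n ∈ F, a n • x (ψ0 (ψ1 (ψ2 n)))‖)) := by
      rcases Stmt7Aux.rosenthal (fun n => x (ψ0 (ψ1 n))) M (fun n => hM _) with
        ⟨ψ2, h1, h2⟩ | ⟨ψ2, h1, c, hc, h2⟩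
      · exact ⟨ψ2, h1, Or.inl h2⟩
      · exact ⟨ψ2, h1, Or.inr ⟨c, hc, h2⟩⟩
    obtain ⟨ψ2, hψ2, hxp⟩ := hstage2
    apply Stmt7Aux.caseB T x M hM (fun n => ψ0 (ψ1 (ψ2 n)))
      (hψ0.comp (hψ1.comp hψ2)) ε hε
    · intro i j hij
      exact hsep (ψ1 (ψ2 i)) (ψ1 (ψ2 j))
        (fun h => hij (hψ2.injective (hψ1.injective h)))
    · rcases hTp with h | ⟨c, hc, hl⟩
      · left
        intro g
        obtain ⟨L, hL⟩ := h g
        exact ⟨L, hL.comp hψ2.tendsto_atTop⟩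
      · right
        exact ⟨c, hc, Stmt7Aux.l1_lower_subseq (fun n => T (x (ψ0 (ψ1 n)))) c hl
          ψ2 hψ2.injective⟩
    · exact hxp
end

section
/- Let e = (e_n) be the canonical basis of ℓ_p for some 1 ≤ p < ∞ (or of c₀), let X, Y be Banach spaces, and let (T_j) be a sequence of operators in JS_{e,ξ}(X,Y) converging in operator norm to T ∈ L(X,Y). Then T ∈ JS_{e,ξ}(X,Y); that is, JS_{e,ξ}(X,Y) is norm-closed in L(X,Y). -/
open Ordinal Filter Topology

/-- `x` `S_ξ`-dominates `e` (relative to the Schreier system `𝒮`). -/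
def SDominates (𝒮 : SchreierSystem) (ξ : Ordinal) {X E : Type*}
    [NormedAddCommGroup X] [NormedSpace ℝ X] [NormedAddCommGroup E] [NormedSpace ℝ E]
    (x : ℕ → X) (e : ℕ → E) : Prop :=
  ∃ C : ℝ, 1 ≤ C ∧ ∀ (a : ℕ → ℝ), ∀ F ∈ 𝒮.S ξ,
    ‖∑ n ∈ F, a n • e n‖ ≤ C * ‖∑ n ∈ F, a n • x n‖

/-- `T` is `(e,ξ)`-singular (class `WS_{e,ξ}`): for every normalized basic sequence `x`,
the image sequence `T ∘ x` fails to `S_ξ`-dominate `e`. -/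
def MemWS (𝒮 : SchreierSystem) (ξ : Ordinal) {X Y E : Type*}
    [NormedAddCommGroup X] [NormedSpace ℝ X] [NormedAddCommGroup Y] [NormedSpace ℝ Y]
    [NormedAddCommGroup E] [NormedSpace ℝ E] (e : ℕ → E) (T : X →L[ℝ] Y) : Prop :=
  ∀ x : ℕ → X, (∀ n, ‖x n‖ = 1) → IsBasicSeq x →
    ¬ SDominates 𝒮 ξ (fun n => T (x n)) e

/-- `T` is of class `JS_{e,ξ}`: for every normalized basic sequence `x` which is
dominated by `e`, the image sequence `T ∘ x` fails to `S_ξ`-dominate `e`. -/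
def MemJS (𝒮 : SchreierSystem) (ξ : Ordinal) {X Y E : Type*}
    [NormedAddCommGroup X] [NormedSpace ℝ X] [NormedAddCommGroup Y] [NormedSpace ℝ Y]
    [NormedAddCommGroup E] [NormedSpace ℝ E] (e : ℕ → E) (T : X →L[ℝ] Y) : Prop :=
  ∀ x : ℕ → X, (∀ n, ‖x n‖ = 1) → IsBasicSeq x → Dominates e x →
    ¬ SDominates 𝒮 ξ (fun n => T (x n)) e


open Filter Topology in
/-- Let `e` be the canonical basis of `ℓ_p` (`1 ≤ p < ∞`) or of `c₀`.
If `(T j)` is a sequence in `JS_{e,ξ}(X,Y)` converging in operator norm to `T₀`,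
then `T₀ ∈ JS_{e,ξ}(X,Y)`; i.e. `JS_{e,ξ}(X,Y)` is norm-closed. -/
theorem stmt12 (𝒮 : SchreierSystem) (ξ : Ordinal) (hξ1 : 1 ≤ ξ) (hξ : ξ ≤ ω₁)
    {X Y E : Type*}
    [NormedAddCommGroup X] [NormedSpace ℝ X] [CompleteSpace X]
    [NormedAddCommGroup Y] [NormedSpace ℝ Y] [CompleteSpace Y]
    [NormedAddCommGroup E] [NormedSpace ℝ E] [CompleteSpace E]
    (e : ℕ → E) (hE : (∃ p : ℝ, 1 ≤ p ∧ IsLpBasis p e) ∨ IsC0Basis e)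
    (T : ℕ → (X →L[ℝ] Y)) (T₀ : X →L[ℝ] Y)
    (hTJS : ∀ j, MemJS 𝒮 ξ e (T j))
    (hconv : Tendsto T atTop (𝓝 T₀)) :
    MemJS 𝒮 ξ e T₀ := by
  intro x hx hbasic hdom hSdom
  obtain ⟨C, hC1, hC⟩ := hSdom
  obtain ⟨D, hD0, hD⟩ := hdom
  have hε : (0:ℝ) < 1 / (2 * C * D) := by positivity
  obtain ⟨j, hj⟩ := (hconv.eventually (Metric.ball_mem_nhds T₀ hε)).exists
  rw [dist_eq_norm] at hj
  refine hTJS j x hx hbasic ⟨D, hD0, hD⟩ ⟨2 * C, by linarith, ?_⟩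
  intro a F hF
  have h1 := hC a F hF
  have h3 := hD a F
  have heq : ∑ n ∈ F, a n • T₀ (x n) - ∑ n ∈ F, a n • (T j) (x n)
      = (T₀ - T j) (∑ n ∈ F, a n • x n) := by
    simp [map_sum, Finset.sum_sub_distrib, smul_sub]
  have h2 : ‖∑ n ∈ F, a n • T₀ (x n)‖
      ≤ ‖∑ n ∈ F, a n • (T j) (x n)‖ + ‖T j - T₀‖ * ‖∑ n ∈ F, a n • x n‖ := by
    calc ‖∑ n ∈ F, a n • T₀ (x n)‖
        ≤ ‖∑ n ∈ F, a n • (T j) (x n)‖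
          + ‖∑ n ∈ F, a n • T₀ (x n) - ∑ n ∈ F, a n • (T j) (x n)‖ := by
          exact norm_le_insert' _ _
      _ ≤ _ := by
          rw [heq]
          refine add_le_add le_rfl ?_
          calc ‖(T₀ - T j) (∑ n ∈ F, a n • x n)‖
              ≤ ‖T₀ - T j‖ * ‖∑ n ∈ F, a n • x n‖ := ContinuousLinearMap.le_opNorm _ _
            _ = ‖T j - T₀‖ * ‖∑ n ∈ F, a n • x n‖ := by rw [norm_sub_rev]
  set A := ‖∑ n ∈ F, a n • e n‖ with hA
  set Bj := ‖∑ n ∈ F, a n • (T j) (x n)‖ with hBj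
  set P := ‖∑ n ∈ F, a n • x n‖ with hP
  have hA0 : 0 ≤ A := norm_nonneg _
  have hBj0 : 0 ≤ Bj := norm_nonneg _
  have hP0 : 0 ≤ P := norm_nonneg _
  have hε0 : 0 ≤ ‖T j - T₀‖ := norm_nonneg _
  -- A ≤ C * (Bj + ε P), P ≤ D A, ε < 1/(2CD)
  have key : ‖T j - T₀‖ * P ≤ (1 / (2 * C * D)) * (D * A) := by
    apply mul_le_mul (le_of_lt hj) (h3.trans (le_refl _)) hP0 (le_of_lt hε)
  have hCD : (1 / (2 * C * D)) * (D * A) = A / (2 * C) := by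
    field_simp
  rw [hCD] at key
  have : A ≤ C * (Bj + A / (2 * C)) := by
    calc A ≤ C * ‖∑ n ∈ F, a n • T₀ (x n)‖ := h1
      _ ≤ C * (Bj + ‖T j - T₀‖ * P) := by
          apply mul_le_mul_of_nonneg_left h2 (by linarith)
      _ ≤ C * (Bj + A / (2 * C)) := by
          apply mul_le_mul_of_nonneg_left (by linarith) (by linarith)
  have hCexp : C * (Bj + A / (2 * C)) = C * Bj + A / 2 := by
    field_simp
  rw [hCexp] at this
  linarith
end
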